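/- arXiv:2508.08579 — 5 statements merged into one kernel-verified Lean document; each statement's English description precedes it below -/
import Mathlib

section
/- Extension of the gKYP lemma to LPV systems (sufficiency direction of Theorem 2). Let n, p, q be positive integers and let A, B, C, D be continuous matrix-valued functions on [0,∞) with values in ℂ^{n×n}, ℂ^{n×p}, ℂ^{q×n}, ℂ^{q×p} respectively (arising from composing continuous matrix functions of the scheduling parameter with a parameter trajectory). Let x : [0,∞) → ℂⁿ be continuously differentiable with x(0) = 0, let u : [0,∞) → ℂ^p be continuous, assume ẋ(t) = A(t)x(t) + B(t)u(t) for all t ≥ 0, and define y(t) = C(t)x(t) + D(t)u(t). Let Π ∈ ℂ^{(q+p)×(q+p)} and Ψ ∈ ℂ^{2×2} be Hermitian, let P : [0,∞) → ℂ^{n×n} be differentiable with P(t) Hermitian for every t, and let Q : [0,∞) → ℂ^{n×n} be continuous with Q(t) Hermitian positive semidefinite for every t. Assume: (i) for every t ≥ 0, the block matrix inequality [A(t) B(t); I 0]^* (Θ ⊗ P(t) + Θ_d ⊗ P'(t) + Ψ ⊗ Q(t)) [A(t) B(t); I 0] + [C(t) D(t); 0 I]^* Π [C(t) D(t); 0 I]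 ⪯ 0 holds; (ii) the function t ↦ [ẋ(t); x(t)]^* (Ψ ⊗ Q(t)) [ẋ(t); x(t)] is integrable on [0,∞) and ∫₀^∞ [ẋ(t); x(t)]^* (Ψ ⊗ Q(t)) [ẋ(t); x(t)] dt ≥ 0; (iii) the function t ↦ [y(t); u(t)]^* Π [y(t); u(t)] is integrable on [0,∞); (iv) lim_{T→∞} x(T)^* P(T) x(T) exists and is nonnegative. Then ∫₀^∞ [y(t); u(t)]^* Π [y(t); u(t)] dt ≤ 0. -/
open Matrix MeasureTheory
open scoped ComplexOrder Matrix.Norms.L2Operator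

/-- `Ψ ⊗ Q`: the Kronecker product of a `2×2` matrix with an `n×n` matrix,
realized as a `2n × 2n` block matrix. -/
noncomputable def kron2 {n : ℕ} (Ψ : Matrix (Fin 2) (Fin 2) ℂ)
    (Q : Matrix (Fin n) (Fin n) ℂ) : Matrix (Fin n ⊕ Fin n) (Fin n ⊕ Fin n) ℂ :=
  Matrix.fromBlocks (Ψ 0 0 • Q) (Ψ 0 1 • Q) (Ψ 1 0 • Q) (Ψ 1 1 • Q)

/-- The real-valued Hermitian quadratic form `z ↦ z^* H z`. -/
noncomputable def qf {m : Type*} [Fintype m] (H : Matrix m m ℂ) (z : m → ℂ) : ℝ :=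
  (dotProduct (star z) (H.mulVec z)).re

private lemma star_sum_elim {n p : Type*} (a : n → ℂ) (b : p → ℂ) :
    star (Sum.elim a b) = Sum.elim (star a) (star b) := by
  funext i; cases i <;> rfl

private lemma qf_add {m : Type*} [Fintype m] (H K : Matrix m m ℂ) (z : m → ℂ) :
    qf (H + K) z = qf H z + qf K z := by
  simp [qf, Matrix.add_mulVec, dotProduct_add]

private lemma qf_conj {m k : Type*} [Fintype m] [Fintype k] (H : Matrix m m ℂ)
    (N : Matrix m k ℂ) (z : k → ℂ) : qf (Nᴴ * H * N) z = qf H (N *ᵥ z) := by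
  unfold qf
  congr 1
  rw [Matrix.star_mulVec, Matrix.mulVec_mulVec, ← dotProduct_mulVec,
    Matrix.mulVec_mulVec, Matrix.mul_assoc]

private lemma qf_nonpos {m : Type*} [Fintype m] {M : Matrix m m ℂ}
    (h : (-M).PosSemidef) (z : m → ℂ) : qf M z ≤ 0 := by
  have h0 := (posSemidef_iff_dotProduct_mulVec.mp h).2 z
  rw [Complex.le_def] at h0
  have h1 : (0:ℝ) ≤ (dotProduct (star z) ((-M) *ᵥ z)).re := by simpa using h0.1
  have h2 : (dotProduct (star z) ((-M) *ᵥ z)).re = - qf M z := by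
    simp [qf, Matrix.neg_mulVec]
  linarith

private noncomputable def entryCLM {m k : Type*} [Fintype m] [Fintype k]
    [DecidableEq m] [DecidableEq k] (i : m) (j : k) :
    Matrix m k ℂ →L[ℝ] ℂ :=
  LinearMap.toContinuousLinearMap
    ({ toFun := fun M => M i j, map_add' := fun _ _ => rfl,
       map_smul' := fun _ _ => rfl } : Matrix m k ℂ →ₗ[ℝ] ℂ)

private lemma hasDerivAt_entry {m k : Type*} [Fintype m] [Fintype k]
    [DecidableEq m] [DecidableEq k]
    {M : ℝ → Matrix m k ℂ} {M' : Matrix m k ℂ} {t : ℝ}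
    (h : HasDerivAt M M' t) (i : m) (j : k) :
    HasDerivAt (fun s => M s i j) (M' i j) t :=
  (entryCLM i j).hasFDerivAt.comp_hasDerivAt t h

private lemma continuousOn_entry {m k : Type*} [Fintype m] [Fintype k]
    [DecidableEq m] [DecidableEq k]
    {M : ℝ → Matrix m k ℂ} {s : Set ℝ} (h : ContinuousOn M s) (i : m) (j : k) :
    ContinuousOn (fun t => M t i j) s :=
  (entryCLM i j).continuous.comp_continuousOn h

private lemma continuousOn_qf {m : Type*} [Fintype m] {M : ℝ → Matrix m m ℂ}
    {v : ℝ → m → ℂ} {s : Set ℝ}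
    (hM : ∀ i j, ContinuousOn (fun t => M t i j) s)
    (hv : ∀ i, ContinuousOn (fun t => v t i) s) :
    ContinuousOn (fun t => qf (M t) (v t)) s := by
  have e : (fun t => qf (M t) (v t))
      = fun t => (∑ i, ∑ j, star (v t i) * (M t i j * v t j)).re := by
    funext t; simp [qf, dotProduct, Matrix.mulVec, Finset.mul_sum]
  rw [e]
  exact Complex.continuous_re.comp_continuousOn
    (continuousOn_finset_sum _ fun i _ =>
      continuousOn_finset_sum _ fun j _ => ((hv i).star.mul ((hM i j).mul (hv j))))

private lemma continuousOn_kron2_entry {n : ℕ} (Ψ : Matrix (Fin 2) (Fin 2) ℂ)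
    {Q : ℝ → Matrix (Fin n) (Fin n) ℂ} {s : Set ℝ} (hQ : ContinuousOn Q s) :
    ∀ i j, ContinuousOn (fun t => kron2 Ψ (Q t) i j) s := by
  rintro (i | i) (j | j) <;>
    simp only [kron2, Matrix.fromBlocks_apply₁₁, Matrix.fromBlocks_apply₁₂,
      Matrix.fromBlocks_apply₂₁, Matrix.fromBlocks_apply₂₂, Matrix.smul_apply,
      smul_eq_mul] <;>
    exact continuousOn_const.mul (continuousOn_entry hQ i j)

private lemma continuousOn_mulVec_apply {m k : Type*} [Fintype m] [Fintype k]
    [DecidableEq m] [DecidableEq k]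
    {M : ℝ → Matrix m k ℂ} {v : ℝ → k → ℂ} {s : Set ℝ}
    (hM : ContinuousOn M s) (hv : ∀ j, ContinuousOn (fun t => v t j) s) (i : m) :
    ContinuousOn (fun t => ((M t).mulVec (v t)) i) s := by
  have e : (fun t => ((M t).mulVec (v t)) i) = fun t => ∑ j, M t i j * v t j := by
    funext t; simp [Matrix.mulVec, dotProduct]
  rw [e]
  exact continuousOn_finset_sum _ fun j _ => (continuousOn_entry hM i j).mul (hv j)

private lemma kron2_sum_eq {n : ℕ} (P P' : Matrix (Fin n) (Fin n) ℂ) :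
    kron2 !![0,1;1,0] P + kron2 !![0,0;0,1] P'
      = Matrix.fromBlocks 0 P P P' := by
  unfold kron2
  rw [Matrix.fromBlocks_add]
  norm_num

private lemma hasDerivAt_V {n : ℕ} {P P' : ℝ → Matrix (Fin n) (Fin n) ℂ}
    {x x' : ℝ → Fin n → ℂ} {t : ℝ}
    (hP : HasDerivAt P (P' t) t) (hx : HasDerivAt x (x' t) t) :
    HasDerivAt (fun s => qf (P s) (x s))
      (qf (kron2 !![0,1;1,0] (P t) + kron2 !![0,0;0,1] (P' t))
        (Sum.elim (x' t) (x t))) t := by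
  have hxe : ∀ i, HasDerivAt (fun s => x s i) (x' t i) t :=
    fun i => hasDerivAt_pi.mp hx i
  have hPe : ∀ i j, HasDerivAt (fun s => P s i j) (P' t i j) t :=
    fun i j => hasDerivAt_entry hP i j
  have hc : HasDerivAt (fun s => ∑ i, star (x s i) * ∑ j, P s i j * x s j)
      (∑ i, (star (x' t i) * ∑ j, P t i j * x t j +
        star (x t i) * ∑ j, (P' t i j * x t j + P t i j * x' t j))) t := by
    apply HasDerivAt.fun_sum
    intro i _
    exact (hxe i).star.mul (HasDerivAt.fun_sum fun j _ => (hPe i j).mul (hxe j))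
  have hre := Complex.reCLM.hasFDerivAt.comp_hasDerivAt t hc
  have efun : (fun s => qf (P s) (x s))
      = fun s => Complex.reCLM (∑ i, star (x s i) * ∑ j, P s i j * x s j) := by
    funext s
    simp [qf, dotProduct, Matrix.mulVec]
  have eval : qf (kron2 !![0,1;1,0] (P t) + kron2 !![0,0;0,1] (P' t))
        (Sum.elim (x' t) (x t))
      = Complex.reCLM (∑ i, (star (x' t i) * ∑ j, P t i j * x t j +
        star (x t i) * ∑ j, (P' t i j * x t j + P t i j * x' t j))) := by
    rw [kron2_sum_eq]
    simp only [Complex.reCLM_apply]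
    simp [qf, Matrix.fromBlocks_mulVec, star_sum_elim,
      sumElim_dotProduct_sumElim, Matrix.zero_mulVec,
      dotProduct_add, dotProduct, Matrix.mulVec, Finset.mul_sum,
      mul_add, Finset.sum_add_distrib]
    ring
  rw [efun, eval]
  exact hre

private lemma lmi_bridge {m k l : Type*} [Fintype m] [Fintype k] [Fintype l]
    (N1 : Matrix k m ℂ) (H1 : Matrix k k ℂ) (N2 : Matrix l m ℂ) (H2 : Matrix l l ℂ)
    (h : Matrix.PosSemidef (-(N1ᴴ * H1 * N1 + N2ᴴ * H2 * N2))) :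
    Matrix.PosSemidef (-((N1ᴴ * H1 * N1 : Matrix m m ℂ) + (N2ᴴ * H2 * N2 : Matrix m m ℂ))) :=
  h

set_option maxHeartbeats 1000000 in
/-- Extension of the gKYP lemma to LPV systems (sufficiency direction of Theorem 2). -/
theorem gKYP_extension_LPV
    {n p q : ℕ} (hn : 0 < n) (hp : 0 < p) (hq : 0 < q)
    (A : ℝ → Matrix (Fin n) (Fin n) ℂ) (B : ℝ → Matrix (Fin n) (Fin p) ℂ)
    (C : ℝ → Matrix (Fin q) (Fin n) ℂ) (D : ℝ → Matrix (Fin q) (Fin p) ℂ)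
    (hA : ContinuousOn A (Set.Ici 0)) (hB : ContinuousOn B (Set.Ici 0))
    (hC : ContinuousOn C (Set.Ici 0)) (hD : ContinuousOn D (Set.Ici 0))
    (x : ℝ → Fin n → ℂ) (x' : ℝ → Fin n → ℂ)
    (hx : ∀ t ∈ Set.Ici (0:ℝ), HasDerivAt x (x' t) t)
    (hx'c : ContinuousOn x' (Set.Ici 0))
    (hx0 : x 0 = 0)
    (u : ℝ → Fin p → ℂ) (hu : ContinuousOn u (Set.Ici 0))
    (hode : ∀ t ∈ Set.Ici (0:ℝ), x' t = (A t).mulVec (x t) + (B t).mulVec (u t))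
    (y : ℝ → Fin q → ℂ)
    (hy : ∀ t ∈ Set.Ici (0:ℝ), y t = (C t).mulVec (x t) + (D t).mulVec (u t))
    (Pi : Matrix (Fin q ⊕ Fin p) (Fin q ⊕ Fin p) ℂ) (hPi : Pi.IsHermitian)
    (Ψ : Matrix (Fin 2) (Fin 2) ℂ) (hΨ : Ψ.IsHermitian)
    (P P' : ℝ → Matrix (Fin n) (Fin n) ℂ)
    (hP : ∀ t ∈ Set.Ici (0:ℝ), HasDerivAt P (P' t) t)
    (hPH : ∀ t ∈ Set.Ici (0:ℝ), (P t).IsHermitian)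
    (Q : ℝ → Matrix (Fin n) (Fin n) ℂ)
    (hQc : ContinuousOn Q (Set.Ici 0))
    (hQ : ∀ t ∈ Set.Ici (0:ℝ), (Q t).PosSemidef)
    -- (i) the pointwise LMI
    (hLMI : ∀ t ∈ Set.Ici (0:ℝ),
      Matrix.PosSemidef
        (-((Matrix.fromBlocks (A t) (B t) (1 : Matrix (Fin n) (Fin n) ℂ) 0)ᴴ *
              (kron2 !![0,1;1,0] (P t) + kron2 !![0,0;0,1] (P' t) + kron2 Ψ (Q t)) *
              Matrix.fromBlocks (A t) (B t) 1 0 +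
            (Matrix.fromBlocks (C t) (D t) 0 (1 : Matrix (Fin p) (Fin p) ℂ))ᴴ * Pi *
              Matrix.fromBlocks (C t) (D t) 0 1)))
    -- (ii) the frequency-dependent IQC
    (hIQCint : IntegrableOn
      (fun t => qf (kron2 Ψ (Q t)) (Sum.elim (x' t) (x t))) (Set.Ioi 0))
    (hIQC : 0 ≤ ∫ t in Set.Ioi (0:ℝ), qf (kron2 Ψ (Q t)) (Sum.elim (x' t) (x t)))
    -- (iii) integrability of the performance integrand
    (hPerfInt : IntegrableOn (fun t => qf Pi (Sum.elim (y t) (u t))) (Set.Ioi 0))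
    -- (iv) the storage function has a nonnegative limit
    (hlim : ∃ L : ℝ, 0 ≤ L ∧
      Filter.Tendsto (fun T => qf (P T) (x T)) Filter.atTop (nhds L)) :
    ∫ t in Set.Ioi (0:ℝ), qf Pi (Sum.elim (y t) (u t)) ≤ 0 := by
  classical
  obtain ⟨L, hL0, hLtend⟩ := hlim
  -- continuity basics
  have hxc : ContinuousOn x (Set.Ici 0) :=
    fun t ht => (hx t ht).continuousAt.continuousWithinAt
  have hxcomp : ∀ i, ContinuousOn (fun t => x t i) (Set.Ici 0) :=
    fun i => (continuous_apply i).comp_continuousOn hxc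
  have hx'comp : ∀ i, ContinuousOn (fun t => x' t i) (Set.Ici 0) :=
    fun i => (continuous_apply i).comp_continuousOn hx'c
  have hucomp : ∀ i, ContinuousOn (fun t => u t i) (Set.Ici 0) :=
    fun i => (continuous_apply i).comp_continuousOn hu
  have hycomp : ∀ i, ContinuousOn (fun t => y t i) (Set.Ici 0) := by
    intro i
    have h1 : ContinuousOn (fun t => ((C t).mulVec (x t)) i + ((D t).mulVec (u t)) i)
        (Set.Ici 0) :=
      (continuousOn_mulVec_apply hC hxcomp i).add (continuousOn_mulVec_apply hD hucomp i)
    exact h1.congr fun t ht => by rw [hy t ht]; rfl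
  have hgc : ContinuousOn (fun t => qf (kron2 Ψ (Q t)) (Sum.elim (x' t) (x t)))
      (Set.Ici 0) :=
    continuousOn_qf (M := fun t => kron2 Ψ (Q t))
      (v := fun t => Sum.elim (x' t) (x t))
      (continuousOn_kron2_entry Ψ hQc)
      (by rintro (i | i); exacts [hx'comp i, hxcomp i])
  have hfc : ContinuousOn (fun t => qf Pi (Sum.elim (y t) (u t))) (Set.Ici 0) :=
    continuousOn_qf (M := fun _ => Pi) (v := fun t => Sum.elim (y t) (u t))
      (fun i j => continuousOn_const)
      (by rintro (i | i); exacts [hycomp i, hucomp i])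
  have hhc : ContinuousOn
      (fun t => qf (kron2 Ψ (Q t)) (Sum.elim (x' t) (x t))
        + qf Pi (Sum.elim (y t) (u t))) (Set.Ici 0) := hgc.add hfc
  -- the pointwise dissipation inequality
  have key : ∀ t ∈ Set.Ici (0:ℝ),
      qf (kron2 !![0,1;1,0] (P t) + kron2 !![0,0;0,1] (P' t)) (Sum.elim (x' t) (x t))
        + (qf (kron2 Ψ (Q t)) (Sum.elim (x' t) (x t))
          + qf Pi (Sum.elim (y t) (u t))) ≤ 0 := by
    intro t ht
    have h1 := qf_nonpos (lmi_bridge _ _ _ _ (hLMI t ht)) (Sum.elim (x t) (u t))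
    rw [qf_add, qf_conj, qf_conj] at h1
    have e1 : (Matrix.fromBlocks (A t) (B t) 1 0) *ᵥ (Sum.elim (x t) (u t))
        = Sum.elim (x' t) (x t) := by
      rw [Matrix.fromBlocks_mulVec]
      simp only [Sum.elim_comp_inl, Sum.elim_comp_inr, Matrix.one_mulVec,
        Matrix.zero_mulVec, add_zero]
      rw [← hode t ht]
    have e2 : (Matrix.fromBlocks (C t) (D t) 0 1) *ᵥ (Sum.elim (x t) (u t))
        = Sum.elim (y t) (u t) := by
      rw [Matrix.fromBlocks_mulVec]
      simp only [Sum.elim_comp_inl, Sum.elim_comp_inr, Matrix.one_mulVec,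
        Matrix.zero_mulVec, zero_add]
      rw [← hy t ht]
    rw [e1, e2, qf_add] at h1
    linarith
  -- the storage function and its derivative
  have hVder : ∀ t ∈ Set.Ici (0:ℝ),
      HasDerivAt (fun s => qf (P s) (x s))
        (qf (kron2 !![0,1;1,0] (P t) + kron2 !![0,0;0,1] (P' t))
          (Sum.elim (x' t) (x t))) t :=
    fun t ht => hasDerivAt_V (hP t ht) (hx t ht)
  -- the combined function F
  have hFcont : ContinuousOn (fun T => qf (P T) (x T)
      + ∫ s in (0:ℝ)..T, (qf (kron2 Ψ (Q s)) (Sum.elim (x' s) (x s))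
        + qf Pi (Sum.elim (y s) (u s)))) (Set.Ici 0) := by
    apply ContinuousOn.add
    · exact fun t ht => (hVder t ht).continuousAt.continuousWithinAt
    · intro t ht
      have ht0 : (0:ℝ) ≤ t := Set.mem_Ici.mp ht
      have huIcc : Set.uIcc (0:ℝ) (t+1) = Set.Icc 0 (t+1) :=
        Set.uIcc_of_le (by linarith)
      have hsub : Set.uIcc (0:ℝ) (t+1) ⊆ Set.Ici 0 := by
        rw [huIcc]; exact Set.Icc_subset_Ici_self
      have hint : IntervalIntegrable
          (fun s => qf (kron2 Ψ (Q s)) (Sum.elim (x' s) (x s))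
            + qf Pi (Sum.elim (y s) (u s))) volume 0 (t+1) :=
        (hhc.mono hsub).intervalIntegrable
      have hcont := intervalIntegral.continuousOn_primitive_interval' hint
        (by rw [huIcc]; exact ⟨le_refl 0, by linarith⟩)
      have hmem : Set.uIcc (0:ℝ) (t+1) ∈ nhdsWithin t (Set.Ici 0) := by
        rw [huIcc, ← Set.Ici_inter_Iic]
        exact Filter.inter_mem self_mem_nhdsWithin
          (mem_nhdsWithin_of_mem_nhds (Iic_mem_nhds (by linarith)))
      exact (hcont t (by rw [huIcc]; exact ⟨ht0, by linarith⟩)).mono_of_mem_nhdsWithin hmem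
  have hFderiv : ∀ t ∈ Set.Ioi (0:ℝ), HasDerivAt (fun T => qf (P T) (x T)
      + ∫ s in (0:ℝ)..T, (qf (kron2 Ψ (Q s)) (Sum.elim (x' s) (x s))
        + qf Pi (Sum.elim (y s) (u s))))
      (qf (kron2 !![0,1;1,0] (P t) + kron2 !![0,0;0,1] (P' t)) (Sum.elim (x' t) (x t))
        + (qf (kron2 Ψ (Q t)) (Sum.elim (x' t) (x t))
          + qf Pi (Sum.elim (y t) (u t)))) t := by
    intro t ht
    have ht' : t ∈ Set.Ici (0:ℝ) := Set.mem_Ici.mpr (le_of_lt ht)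
    have hint : IntervalIntegrable
        (fun s => qf (kron2 Ψ (Q s)) (Sum.elim (x' s) (x s))
          + qf Pi (Sum.elim (y s) (u s))) volume 0 t := by
      apply ContinuousOn.intervalIntegrable
      apply hhc.mono
      rw [Set.uIcc_of_le (le_of_lt ht)]
      exact Set.Icc_subset_Ici_self
    have hmeas : StronglyMeasurableAtFilter
        (fun s => qf (kron2 Ψ (Q s)) (Sum.elim (x' s) (x s))
          + qf Pi (Sum.elim (y s) (u s))) (nhds t) volume :=
      ContinuousOn.stronglyMeasurableAtFilter isOpen_Ioi
        (hhc.mono Set.Ioi_subset_Ici_self) t ht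
    have hcont : ContinuousAt
        (fun s => qf (kron2 Ψ (Q s)) (Sum.elim (x' s) (x s))
          + qf Pi (Sum.elim (y s) (u s))) t :=
      hhc.continuousAt (Ici_mem_nhds ht)
    exact (hVder t ht').add (intervalIntegral.integral_hasDerivAt_right hint hmeas hcont)
  have hanti : AntitoneOn (fun T => qf (P T) (x T)
      + ∫ s in (0:ℝ)..T, (qf (kron2 Ψ (Q s)) (Sum.elim (x' s) (x s))
        + qf Pi (Sum.elim (y s) (u s)))) (Set.Ici 0) := by
    apply antitoneOn_of_deriv_nonpos (convex_Ici 0) hFcont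
    · intro t ht
      rw [interior_Ici] at ht
      exact (hFderiv t ht).differentiableAt.differentiableWithinAt
    · intro t ht
      rw [interior_Ici] at ht
      rw [(hFderiv t ht).deriv]
      exact key t (Set.mem_Ici.mpr (le_of_lt ht))
  have hF0 : qf (P 0) (x 0) + (∫ s in (0:ℝ)..(0:ℝ),
      (qf (kron2 Ψ (Q s)) (Sum.elim (x' s) (x s))
        + qf Pi (Sum.elim (y s) (u s)))) = 0 := by
    simp [hx0, qf]
  have hFle : ∀ T ∈ Set.Ici (0:ℝ), qf (P T) (x T)
      + (∫ s in (0:ℝ)..T, (qf (kron2 Ψ (Q s)) (Sum.elim (x' s) (x s))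
        + qf Pi (Sum.elim (y s) (u s)))) ≤ 0 := by
    intro T hT
    have := hanti Set.self_mem_Ici hT (Set.mem_Ici.mp hT)
    dsimp only at this
    linarith
  -- limits
  have hGF : IntegrableOn
      (fun s => qf (kron2 Ψ (Q s)) (Sum.elim (x' s) (x s))
        + qf Pi (Sum.elim (y s) (u s))) (Set.Ioi 0) := hIQCint.add hPerfInt
  have hint_tend : Filter.Tendsto (fun T => ∫ s in (0:ℝ)..T,
      (qf (kron2 Ψ (Q s)) (Sum.elim (x' s) (x s))
        + qf Pi (Sum.elim (y s) (u s)))) Filter.atTop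
      (nhds ((∫ s in Set.Ioi (0:ℝ), qf (kron2 Ψ (Q s)) (Sum.elim (x' s) (x s)))
        + ∫ s in Set.Ioi (0:ℝ), qf Pi (Sum.elim (y s) (u s)))) := by
    have h1 := intervalIntegral_tendsto_integral_Ioi 0 hGF Filter.tendsto_id
    rwa [integral_add hIQCint hPerfInt] at h1
  have hFtend : Filter.Tendsto (fun T => qf (P T) (x T)
      + ∫ s in (0:ℝ)..T, (qf (kron2 Ψ (Q s)) (Sum.elim (x' s) (x s))
        + qf Pi (Sum.elim (y s) (u s)))) Filter.atTop
      (nhds (L + ((∫ s in Set.Ioi (0:ℝ), qf (kron2 Ψ (Q s)) (Sum.elim (x' s) (x s)))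
        + ∫ s in Set.Ioi (0:ℝ), qf Pi (Sum.elim (y s) (u s))))) :=
    hLtend.add hint_tend
  have hfinal : L + ((∫ s in Set.Ioi (0:ℝ), qf (kron2 Ψ (Q s)) (Sum.elim (x' s) (x s)))
      + ∫ s in Set.Ioi (0:ℝ), qf Pi (Sum.elim (y s) (u s))) ≤ 0 :=
    le_of_tendsto hFtend (Filter.eventually_atTop.mpr ⟨0, fun T hT => hFle T hT⟩)
  linarith [hIQC]
end

section
/- Uniform BIBS stability implies a uniform L¹ bound on the input-to-state kernel (Lemma 7, item (2)). Let Φ be a continuous function assigning to each pair (t,τ) with 0 ≤ τ ≤ t a matrix Φ(t,τ) ∈ ℝ^{n×n}, and let B : [0,∞) → ℝ^{n×p} be continuous. Suppose there exists η ≥ 0 such that for every measurable function u : [0,∞) → ℝ^p with ‖u(τ)‖ ≤ 1 for all τ, and for every t ≥ 0, ‖∫₀^t Φ(t,τ) B(τ) u(τ) dτ‖ ≤ η. Then there exists a constant n₂ ≥ 0 such that ∫₀^t ‖Φ(t,τ) B(τ)‖ dτ ≤ n₂ for all t ≥ 0. -/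
open Matrix MeasureTheory
open scoped Matrix.Norms.L2Operator

/-- The Euclidean norm of a real vector. -/
noncomputable def eucNorm {n : ℕ} (v : Fin n → ℝ) : ℝ :=
  Real.sqrt (∑ i, v i ^ 2)

private lemma measurable_realSign : Measurable Real.sign := by
  have h : Real.sign = fun r : ℝ => if r < 0 then (-1 : ℝ) else if 0 < r then 1 else 0 := by
    funext r; rfl
  rw [h]
  exact Measurable.ite measurableSet_Iio measurable_const
    (Measurable.ite measurableSet_Ioi measurable_const measurable_const)

private lemma mul_sign_eq_abs (x : ℝ) : x * Real.sign x = |x| := by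
  rcases lt_trichotomy x 0 with h | h | h
  · rw [Real.sign_of_neg h, abs_of_neg h]; ring
  · simp [h]
  · rw [Real.sign_of_pos h, abs_of_pos h, mul_one]

private lemma sign_sq_le_one (x : ℝ) : Real.sign x ^ 2 ≤ 1 := by
  rcases Real.sign_apply_eq x with h | h | h <;> rw [h] <;> norm_num

private lemma entry_integral_le {n p : ℕ} (Φ : ℝ → ℝ → Matrix (Fin n) (Fin n) ℝ)
    (B : ℝ → Matrix (Fin n) (Fin p) ℝ) (η : ℝ)
    (hBIBS : ∀ u : ℝ → Fin p → ℝ, Measurable u →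
      (∀ τ : ℝ, eucNorm (u τ) ≤ 1) →
      ∀ t : ℝ, 0 ≤ t →
        eucNorm (∫ τ in (0:ℝ)..t, (Φ t τ * B τ).mulVec (u τ)) ≤ η)
    (t : ℝ) (ht : 0 ≤ t)
    (G : ℝ → Matrix (Fin n) (Fin p) ℝ) (hG_cont : Continuous G)
    (hG_eq : ∀ τ ∈ Set.Icc (0:ℝ) t, G τ = Φ t τ * B τ)
    (i : Fin n) (j : Fin p) :
    (∫ τ in (0:ℝ)..t, |G τ i j|) ≤ η := by
  classical
  set u : ℝ → Fin p → ℝ := fun τ j' => if j' = j then Real.sign (G τ i j) else 0 with hu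
  have hGm : ∀ i' j', Measurable fun τ => G τ i' j' := fun i' j' =>
    (continuous_apply_apply i' j' |>.comp hG_cont).measurable
  have hu_meas : Measurable u := by
    refine measurable_pi_lambda _ fun j' => ?_
    by_cases h : j' = j
    · simpa [hu, h, Function.comp_def] using measurable_realSign.comp (hGm i j)
    · simpa [hu, h] using measurable_const
  have hu_bd : ∀ τ, eucNorm (u τ) ≤ 1 := by
    intro τ
    rw [eucNorm]
    refine Real.sqrt_le_one.mpr ((le_of_eq ?_).trans (sign_sq_le_one (G τ i j)))
    rw [hu]; simp [apply_ite (· ^ 2)]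
  have key := hBIBS u hu_meas hu_bd t ht
  set F : ℝ → Fin n → ℝ := fun τ => (G τ).mulVec (u τ) with hF
  have hF_eq : Set.EqOn (fun τ => (Φ t τ * B τ).mulVec (u τ)) F (Set.uIcc 0 t) := by
    intro τ hτ
    rw [Set.uIcc_of_le ht] at hτ
    simp only [hF, hG_eq τ hτ]
  rw [intervalIntegral.integral_congr hF_eq] at key
  have hF_comp : ∀ τ i', F τ i' = G τ i' j * Real.sign (G τ i j) := by
    intro τ i'
    simp [hF, hu, Matrix.mulVec, dotProduct]
  have hF_int : IntervalIntegrable F volume 0 t := by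
    rw [intervalIntegrable_iff]
    have hmeas : AEStronglyMeasurable F (volume.restrict (Set.uIoc 0 t)) := by
      refine Measurable.aestronglyMeasurable (measurable_pi_lambda _ fun i' => ?_)
      simpa only [hF_comp, Function.comp_def, Pi.mul_def] using (hGm i' j).mul (measurable_realSign.comp (hGm i j))
    have hcont : Continuous fun τ => ∑ i' : Fin n, |G τ i' j| :=
      continuous_finset_sum _ fun i' _ =>
        continuous_abs.comp ((continuous_apply_apply i' j).comp hG_cont)
    refine Integrable.mono' (g := fun τ => ∑ i', |G τ i' j|) hcont.integrableOn_uIoc hmeas ?_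
    refine Filter.Eventually.of_forall fun τ => ?_
    rw [pi_norm_le_iff_of_nonneg (Finset.sum_nonneg fun _ _ => abs_nonneg _)]
    intro i'
    rw [hF_comp, Real.norm_eq_abs, abs_mul]
    calc |G τ i' j| * |Real.sign (G τ i j)| ≤ |G τ i' j| * 1 := by
          refine mul_le_mul_of_nonneg_left ?_ (abs_nonneg _)
          rcases Real.sign_apply_eq (G τ i j) with h | h | h <;> rw [h] <;> norm_num
    _ = |G τ i' j| := mul_one _
    _ ≤ ∑ i', |G τ i' j| := Finset.single_le_sum (f := fun k => |G τ k j|) (fun k _ => abs_nonneg _) (Finset.mem_univ i')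
  have hcomp : (∫ τ in (0:ℝ)..t, F τ) i = ∫ τ in (0:ℝ)..t, F τ i := by
    have := (ContinuousLinearMap.proj (R := ℝ) (φ := fun _ : Fin n => ℝ)
      i).intervalIntegral_comp_comm hF_int
    simpa using this.symm
  have h1 : |(∫ τ in (0:ℝ)..t, F τ) i| ≤ η := by
    refine le_trans ?_ key
    rw [eucNorm, ← Real.sqrt_sq_eq_abs]
    exact Real.sqrt_le_sqrt (Finset.single_le_sum (f := fun k => (∫ τ in (0:ℝ)..t, F τ) k ^ 2) (fun k _ => sq_nonneg _) (Finset.mem_univ i))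
  have h2 : (∫ τ in (0:ℝ)..t, F τ i) = ∫ τ in (0:ℝ)..t, |G τ i j| :=
    intervalIntegral.integral_congr fun τ _ => by rw [hF_comp]; exact mul_sign_eq_abs _
  calc (∫ τ in (0:ℝ)..t, |G τ i j|) ≤ |∫ τ in (0:ℝ)..t, F τ i| := by
        rw [h2]; exact le_abs_self _
  _ = |(∫ τ in (0:ℝ)..t, F τ) i| := by rw [hcomp]
  _ ≤ η := h1

private lemma sqrt_sum_sq_le_sum_abs {m : ℕ} (v : Fin m → ℝ) :
    Real.sqrt (∑ i, v i ^ 2) ≤ ∑ i, |v i| := by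
  have h : ∑ i, v i ^ 2 ≤ (∑ i, |v i|) ^ 2 := by
    calc ∑ i, v i ^ 2 = ∑ i, |v i| ^ 2 := by simp [sq_abs]
    _ ≤ (∑ i, |v i|) ^ 2 := Finset.sum_sq_le_sq_sum_of_nonneg fun i _ => abs_nonneg _
  calc Real.sqrt (∑ i, v i ^ 2) ≤ Real.sqrt ((∑ i, |v i|) ^ 2) := Real.sqrt_le_sqrt h
  _ = ∑ i, |v i| := Real.sqrt_sq (Finset.sum_nonneg fun i _ => abs_nonneg _)

private lemma l2_opNorm_le_sum_abs {n p : ℕ} (A : Matrix (Fin n) (Fin p) ℝ) :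
    ‖A‖ ≤ ∑ i, ∑ j, |A i j| := by
  rw [Matrix.l2_opNorm_def]
  refine ContinuousLinearMap.opNorm_le_bound _
    (Finset.sum_nonneg fun _ _ => Finset.sum_nonneg fun _ _ => abs_nonneg _) fun x => ?_
  have hx : ∀ j, |x j| ≤ ‖x‖ := by
    intro j
    rw [EuclideanSpace.norm_eq, ← Real.sqrt_sq_eq_abs]
    refine Real.sqrt_le_sqrt ?_
    refine Finset.single_le_sum (f := fun k => ‖x k‖ ^ 2) (fun k _ => by positivity)
      (Finset.mem_univ j) |>.trans_eq' ?_
    simp [Real.norm_eq_abs, sq_abs]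
  have happ : ∀ i, ((Matrix.toEuclideanLin.trans LinearMap.toContinuousLinearMap) A x) i
      = A.mulVec x i := fun i => rfl
  calc ‖(Matrix.toEuclideanLin.trans LinearMap.toContinuousLinearMap) A x‖
      = Real.sqrt (∑ i, (A.mulVec x i) ^ 2) := by
        rw [EuclideanSpace.norm_eq]
        congr 1; refine Finset.sum_congr rfl fun i _ => ?_
        rw [happ, Real.norm_eq_abs, sq_abs]
    _ ≤ ∑ i, |A.mulVec x i| := sqrt_sum_sq_le_sum_abs _
    _ ≤ ∑ i, ∑ j, |A i j| * ‖x‖ := by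
        refine Finset.sum_le_sum fun i _ => ?_
        calc |A.mulVec x i| = |∑ j, A i j * x j| := by rfl
        _ ≤ ∑ j, |A i j * x j| := Finset.abs_sum_le_sum_abs _ _
        _ ≤ ∑ j, |A i j| * ‖x‖ := Finset.sum_le_sum fun j _ => by
            rw [abs_mul]; exact mul_le_mul_of_nonneg_left (hx j) (abs_nonneg _)
    _ = (∑ i, ∑ j, |A i j|) * ‖x‖ := by rw [Finset.sum_mul]; simp [Finset.sum_mul]

/-- Uniform BIBS stability implies a uniform L¹ bound on the input-to-state
kernel (Lemma 7, item (2)).  Here `‖·‖` on matrices is the operator norm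
induced by the Euclidean norm (the scoped `Matrix.L2OpNorm` instance). -/
theorem BIBS_implies_L1_kernel_bound
    {n p : ℕ} (Φ : ℝ → ℝ → Matrix (Fin n) (Fin n) ℝ)
    (hΦcont : ContinuousOn (fun z : ℝ × ℝ => Φ z.1 z.2)
      {z : ℝ × ℝ | 0 ≤ z.2 ∧ z.2 ≤ z.1})
    (B : ℝ → Matrix (Fin n) (Fin p) ℝ) (hB : ContinuousOn B (Set.Ici 0))
    (η : ℝ) (hη : 0 ≤ η)
    (hBIBS : ∀ u : ℝ → Fin p → ℝ, Measurable u →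
      (∀ τ : ℝ, eucNorm (u τ) ≤ 1) →
      ∀ t : ℝ, 0 ≤ t →
        eucNorm (∫ τ in (0:ℝ)..t, (Φ t τ * B τ).mulVec (u τ)) ≤ η) :
    ∃ n₂ : ℝ, 0 ≤ n₂ ∧ ∀ t : ℝ, 0 ≤ t →
      (∫ τ in (0:ℝ)..t, ‖Φ t τ * B τ‖) ≤ n₂ := by
  classical
  refine ⟨(n * p : ℝ) * η, by positivity, fun t ht => ?_⟩
  -- clamped time
  set c : ℝ → ℝ := fun τ => max 0 (min τ t) with hc
  have hc_cont : Continuous c := (continuous_const.max (continuous_id.min continuous_const))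
  have hc_mem : ∀ τ, 0 ≤ c τ ∧ c τ ≤ t := fun τ =>
    ⟨le_max_left _ _, max_le ht (min_le_right _ _)⟩
  have hc_eq : ∀ τ ∈ Set.Icc (0:ℝ) t, c τ = τ := fun τ hτ => by
    simp [hc, min_eq_left hτ.2, max_eq_right hτ.1]
  set G : ℝ → Matrix (Fin n) (Fin p) ℝ := fun τ => Φ t (c τ) * B (c τ) with hG
  have h1 : Continuous fun τ => Φ t (c τ) := by
    have := hΦcont.comp_continuous (continuous_const.prodMk hc_cont)
      (fun τ => ⟨(hc_mem τ).1, (hc_mem τ).2⟩)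
    exact this
  have h2 : Continuous fun τ => B (c τ) :=
    hB.comp_continuous hc_cont fun τ => (hc_mem τ).1
  have hG_cont : Continuous G := h1.matrix_mul h2
  have hG_eq : ∀ τ ∈ Set.Icc (0:ℝ) t, G τ = Φ t τ * B τ := fun τ hτ => by
    rw [hG]; simp only [hc_eq τ hτ]
  -- rewrite goal in terms of G
  have e1 : (∫ τ in (0:ℝ)..t, ‖Φ t τ * B τ‖) = ∫ τ in (0:ℝ)..t, ‖G τ‖ :=
    intervalIntegral.integral_congr fun τ hτ => by
      rw [Set.uIcc_of_le ht] at hτ; rw [hG_eq τ hτ]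
  rw [e1]
  have hint1 : IntervalIntegrable (fun τ => ‖G τ‖) volume 0 t :=
    (hG_cont.norm).intervalIntegrable 0 t
  have hint2 : IntervalIntegrable (fun τ => ∑ i, ∑ j, |G τ i j|) volume 0 t := by
    refine Continuous.intervalIntegrable ?_ 0 t
    refine continuous_finset_sum _ fun i _ => continuous_finset_sum _ fun j _ =>
      continuous_abs.comp ((continuous_apply_apply i j).comp hG_cont)
  calc (∫ τ in (0:ℝ)..t, ‖G τ‖) ≤ ∫ τ in (0:ℝ)..t, ∑ i, ∑ j, |G τ i j| := by
        refine intervalIntegral.integral_mono_on ht hint1 hint2 fun τ _ => ?_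
        exact l2_opNorm_le_sum_abs (G τ)
  _ = ∑ i, ∑ j, ∫ τ in (0:ℝ)..t, |G τ i j| := by
        rw [intervalIntegral.integral_finset_sum]
        · refine Finset.sum_congr rfl fun i _ => ?_
          rw [intervalIntegral.integral_finset_sum]
          intro j _
          exact (continuous_abs.comp ((continuous_apply_apply i j).comp hG_cont)).intervalIntegrable 0 t
        · intro i _
          refine Continuous.intervalIntegrable ?_ 0 t
          exact continuous_finset_sum _ fun j _ =>
            continuous_abs.comp ((continuous_apply_apply i j).comp hG_cont)
  _ ≤ ∑ _i : Fin n, ∑ _j : Fin p, η := by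
        refine Finset.sum_le_sum fun i _ => Finset.sum_le_sum fun j _ => ?_
        exact entry_integral_le Φ B η hBIBS t ht G hG_cont hG_eq i j
  _ = (n * p : ℝ) * η := by simp [Finset.sum_const]; ring
end

section
/- Decomposition of the per-frequency forced response of an LPV system (equations (x-Dx)/(V-LPV)). Let p : [0,∞) → ℝ^l be continuously differentiable, let A : ℝ^l → ℂ^{n×n} and B : ℝ^l → ℂ^{n×p} be continuously differentiable, and let Φ be a state transition matrix for A∘p, i.e. Φ(t,τ) ∈ ℂ^{n×n} is jointly continuous in (t,τ), for each fixed t the map τ ↦ Φ(t,τ) is differentiable with ∂Φ(t,τ)/∂τ = −Φ(t,τ) A(p(τ)), and Φ(t,t) = I for all t. Fix t ≥ 0 and ω ∈ ℝ such that iωI − A(p(t)) is invertible, and write R = (iωI − A(p(t)))^{-1}. Then ∫₀^t Φ(t,τ) B(p(τ)) e^{iωτ} dτ = e^{iωt} R B(p(t)) − Φ(t,0) R B(p(0)) − ∫₀^t Φ(t,τ) (A(p(t)) − A(p(τ))) e^{iωτ} R B(p(τ)) dτ − ∫₀^t Φ(t,τ) e^{iωτ} R · (d/dτ)(B(p(τ)))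 dτ; that is, the forced response per unit frequency component equals V_p¹(iω) + V_p²(iω) + V_{ṗ}¹(iω) + V_{ṗ}²(iω) as defined in the paper. -/
set_option maxHeartbeats 1000000


open Matrix MeasureTheory
open scoped Matrix.Norms.L2Operator

/-- Decomposition of the per-frequency forced response of an LPV system
(equations (x-Dx)/(V-LPV)). -/
theorem LPV_forced_response_decomposition
    {l n m : ℕ}
    (ρ : ℝ → Fin l → ℝ) (hρ : ContDiff ℝ 1 ρ)
    (A : (Fin l → ℝ) → Matrix (Fin n) (Fin n) ℂ) (hA : ContDiff ℝ 1 A)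
    (B : (Fin l → ℝ) → Matrix (Fin n) (Fin m) ℂ) (hB : ContDiff ℝ 1 B)
    (Φ : ℝ → ℝ → Matrix (Fin n) (Fin n) ℂ)
    (hΦcont : Continuous (fun z : ℝ × ℝ => Φ z.1 z.2))
    (hΦτ : ∀ t τ : ℝ, HasDerivAt (fun s => Φ t s) (-(Φ t τ * A (ρ τ))) τ)
    (hΦdiag : ∀ t : ℝ, Φ t t = 1)
    (t : ℝ) (ht : 0 ≤ t) (ω : ℝ)
    (hω : (Complex.I * ω) ∉ spectrum ℂ (A (ρ t))) :
    (∫ τ in (0:ℝ)..t, Complex.exp (Complex.I * ω * τ) • (Φ t τ * B (ρ τ))) =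
      Complex.exp (Complex.I * ω * t) •
          (((Complex.I * ω) • (1 : Matrix (Fin n) (Fin n) ℂ) - A (ρ t))⁻¹ * B (ρ t)) -
        Φ t 0 * ((Complex.I * ω) • (1 : Matrix (Fin n) (Fin n) ℂ) - A (ρ t))⁻¹ * B (ρ 0) -
        (∫ τ in (0:ℝ)..t, Complex.exp (Complex.I * ω * τ) •
          (Φ t τ * (A (ρ t) - A (ρ τ)) *
            ((Complex.I * ω) • (1 : Matrix (Fin n) (Fin n) ℂ) - A (ρ t))⁻¹ * B (ρ τ))) -
        (∫ τ in (0:ℝ)..t, Complex.exp (Complex.I * ω * τ) •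
          (Φ t τ * ((Complex.I * ω) • (1 : Matrix (Fin n) (Fin n) ℂ) - A (ρ t))⁻¹ *
            deriv (fun s => B (ρ s)) τ)) := by
  set M : Matrix (Fin n) (Fin n) ℂ :=
    (Complex.I * ω) • (1 : Matrix (Fin n) (Fin n) ℂ) - A (ρ t) with hM
  set R : Matrix (Fin n) (Fin n) ℂ := M⁻¹ with hRdef
  -- invertibility
  have hunit : IsUnit M := by
    have h := spectrum.notMem_iff.mp hω
    rw [Algebra.algebraMap_eq_smul_one] at h
    rwa [hM]
  have hMR : M * R = 1 :=
    Matrix.mul_nonsing_inv _ ((Matrix.isUnit_iff_isUnit_det _).mp hunit)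
  -- multiplication as a continuous bilinear map (real-linear)
  let L :=
    LinearMap.mkContinuous₂ (𝕜 := ℝ) (𝕜₂ := ℝ) (𝕜₃ := ℝ)
      (E := Matrix (Fin n) (Fin n) ℂ) (F := Matrix (Fin n) (Fin m) ℂ)
      (G := Matrix (Fin n) (Fin m) ℂ)
      (LinearMap.mk₂ ℝ (fun X Y => X * Y)
        (fun X X' Y => Matrix.add_mul X X' Y)
        (fun c X Y => Matrix.smul_mul c X Y)
        (fun X Y Y' => Matrix.mul_add X Y Y')
        (fun c X Y => Matrix.mul_smul X c Y)) 1
      (by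
        intro X Y
        simpa using Matrix.l2_opNorm_mul X Y)
  have hLapp : ∀ (X : Matrix (Fin n) (Fin n) ℂ) (Y : Matrix (Fin n) (Fin m) ℂ),
      L X Y = X * Y := fun X Y => rfl
  -- continuity facts
  have hΦt : Continuous fun τ : ℝ => Φ t τ :=
    hΦcont.comp (continuous_const.prodMk continuous_id)
  have hAρ : Continuous fun τ : ℝ => A (ρ τ) := hA.continuous.comp hρ.continuous
  have hBρc : Continuous fun τ : ℝ => B (ρ τ) := hB.continuous.comp hρ.continuous
  have hBρ : ContDiff ℝ 1 fun s : ℝ => B (ρ s) := hB.comp hρ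
  have hBd : Continuous (deriv fun s : ℝ => B (ρ s)) := hBρ.continuous_deriv le_rfl
  have hexpc : Continuous fun τ : ℝ => Complex.exp (Complex.I * ω * τ) :=
    Complex.continuous_exp.comp (continuous_const.mul Complex.continuous_ofReal)
  -- the potential function and its derivative
  set f : ℝ → Matrix (Fin n) (Fin m) ℂ :=
    fun τ => Complex.exp (Complex.I * ω * τ) • (Φ t τ * R * B (ρ τ)) with hf
  set g1 : ℝ → Matrix (Fin n) (Fin m) ℂ :=
    fun τ => Complex.exp (Complex.I * ω * τ) • (Φ t τ * B (ρ τ)) with hg1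
  set g2 : ℝ → Matrix (Fin n) (Fin m) ℂ :=
    fun τ => Complex.exp (Complex.I * ω * τ) • (Φ t τ * (A (ρ t) - A (ρ τ)) * R * B (ρ τ)) with hg2
  set g3 : ℝ → Matrix (Fin n) (Fin m) ℂ :=
    fun τ => Complex.exp (Complex.I * ω * τ) • (Φ t τ * R * deriv (fun s => B (ρ s)) τ) with hg3
  have hderiv : ∀ τ : ℝ, HasDerivAt f (g1 τ + g2 τ + g3 τ) τ := by
    intro τ
    have hexp : HasDerivAt (fun s : ℝ => Complex.exp (Complex.I * ω * s))
        (Complex.exp (Complex.I * ω * τ) * (Complex.I * ω)) τ := by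
      have h0 : HasDerivAt (fun s : ℝ => (s : ℂ)) 1 τ := by
        simpa using (hasDerivAt_id τ).ofReal_comp
      simpa using (h0.const_mul (Complex.I * ω)).cexp
    have hΦ' : HasDerivAt (fun s => Φ t s) (-(Φ t τ * A (ρ τ))) τ := hΦτ t τ
    have hc : HasDerivAt (fun s => L (Φ t s)) (L (-(Φ t τ * A (ρ τ)))) τ :=
      L.hasFDerivAt.comp_hasDerivAt τ hΦ'
    have hBd' : HasDerivAt (fun s => B (ρ s)) (deriv (fun s => B (ρ s)) τ) τ :=
      ((hBρ.differentiable one_ne_zero) τ).hasDerivAt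
    have hu : HasDerivAt (fun s => R * B (ρ s)) (R * deriv (fun s => B (ρ s)) τ) τ :=
      (L R).hasFDerivAt.comp_hasDerivAt τ hBd'
    have hG : HasDerivAt (fun s => Φ t s * (R * B (ρ s)))
        ((-(Φ t τ * A (ρ τ))) * (R * B (ρ τ)) + Φ t τ * (R * deriv (fun s => B (ρ s)) τ)) τ := by
      have h := hc.clm_apply hu
      simpa [hLapp] using h
    have hF := hexp.smul hG
    have key : Complex.exp (Complex.I * ω * τ) •
          ((-(Φ t τ * A (ρ τ))) * (R * B (ρ τ)) + Φ t τ * (R * deriv (fun s => B (ρ s)) τ)) +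
        (Complex.exp (Complex.I * ω * τ) * (Complex.I * ω)) • (Φ t τ * (R * B (ρ τ))) =
        g1 τ + g2 τ + g3 τ := by
      have e1 : (Complex.exp (Complex.I * ω * τ) * (Complex.I * ω)) • (Φ t τ * (R * B (ρ τ))) =
          Complex.exp (Complex.I * ω * τ) •
            (Φ t τ * ((Complex.I * ω) • (1 : Matrix (Fin n) (Fin n) ℂ)) * R * B (ρ τ)) := by
        rw [mul_smul]
        congr 1
        simp only [Matrix.mul_smul, Matrix.smul_mul, Matrix.mul_one, Matrix.mul_assoc]
      have e2 : (Complex.I * ω) • (1 : Matrix (Fin n) (Fin n) ℂ) = M + A (ρ t) := by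
        rw [hM]; abel
      simp only [hg1, hg2, hg3]
      rw [e1, e2]
      simp only [← smul_add]
      congr 1
      have hMR' : Φ t τ * M * R = Φ t τ := by rw [mul_assoc, hMR, mul_one]
      have expand : Φ t τ * (M + A (ρ t)) * R * B (ρ τ) =
          Φ t τ * M * R * B (ρ τ) + Φ t τ * A (ρ t) * R * B (ρ τ) := by
        rw [Matrix.mul_add, Matrix.add_mul, Matrix.add_mul]
      have e4 : Φ t τ * (A (ρ t) - A (ρ τ)) * R * B (ρ τ) =
          Φ t τ * A (ρ t) * R * B (ρ τ) - Φ t τ * A (ρ τ) * R * B (ρ τ) := by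
        rw [Matrix.mul_sub, Matrix.sub_mul, Matrix.sub_mul]
      have e5 : -(Φ t τ * A (ρ τ)) * (R * B (ρ τ)) =
          -(Φ t τ * A (ρ τ) * R * B (ρ τ)) := by
        rw [Matrix.neg_mul, ← Matrix.mul_assoc]
      have e6 : Φ t τ * (R * deriv (fun s => B (ρ s)) τ) =
          Φ t τ * R * deriv (fun s => B (ρ s)) τ := (Matrix.mul_assoc _ _ _).symm
      rw [expand, e4, e5, e6, hMR']
      abel
    have hfeq : f = fun y : ℝ => Complex.exp (Complex.I * ω * y) • (Φ t y * (R * B (ρ y))) := by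
      funext y
      simp only [hf, Matrix.mul_assoc]
    rw [hfeq, ← key]
    exact hF
  -- integrability
  have hg1i : IntervalIntegrable g1 volume 0 t :=
    (hexpc.smul (hΦt.matrix_mul hBρc)).intervalIntegrable _ _
  have hg2i : IntervalIntegrable g2 volume 0 t :=
    (hexpc.smul (((hΦt.matrix_mul (continuous_const.sub hAρ)).matrix_mul
      continuous_const).matrix_mul hBρc)).intervalIntegrable _ _
  have hg3i : IntervalIntegrable g3 volume 0 t :=
    (hexpc.smul ((hΦt.matrix_mul continuous_const).matrix_mul hBd)).intervalIntegrable _ _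
  have hsum : (∫ τ in (0:ℝ)..t, (g1 τ + g2 τ + g3 τ)) = f t - f 0 :=
    intervalIntegral.integral_eq_sub_of_hasDerivAt (fun τ _ => hderiv τ)
      ((hg1i.add hg2i).add hg3i)
  rw [intervalIntegral.integral_add (hg1i.add hg2i) hg3i,
    intervalIntegral.integral_add hg1i hg2i] at hsum
  have hft : f t = Complex.exp (Complex.I * ω * t) • (R * B (ρ t)) := by
    simp [hf, hΦdiag t]
  have hf0 : f 0 = Φ t 0 * R * B (ρ 0) := by
    simp [hf]
  rw [← hft, ← hf0, ← hsum]
  abel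
end

section
/- Lyapunov differential inequality for the factored Gramian (Remark containing equations (Lya_W_dp)). Let A : [0,∞) → ℂ^{n×n} be continuous, let M : [0,∞) → ℂ^{n×n} be continuous, and let Φ be a state transition matrix for A as above: Φ jointly continuous on {(t,τ) : 0 ≤ τ ≤ t}, t ↦ Φ(t,τ) differentiable with ∂Φ(t,τ)/∂t = A(t) Φ(t,τ), Φ(τ,τ) = I, with ∂Φ/∂t jointly continuous. Define F(t) = ∫₀^t Φ(t,τ) M(τ) dτ and W(t) = F(t) F(t)^*. Suppose M̄ ∈ ℂ^{n×n} is Hermitian with M(t) M(t)^* ⪯ M̄ for all t ≥ 0. Then W is differentiable on (0,∞) and for every t > 0, W'(t) ⪯ A(t) W(t) + W(t) A(t)^* + W(t) + M̄. -/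
open Matrix MeasureTheory
open scoped ComplexOrder Matrix.Norms.L2Operator

lemma psd_aux {n : ℕ} (Ft Mt At Mbar : Matrix (Fin n) (Fin n) ℂ)
    (h1 : (Mbar - Mt * Mtᴴ).PosSemidef) :
    (At * (Ft * Ftᴴ) + (Ft * Ftᴴ) * Atᴴ + Ft * Ftᴴ + Mbar -
      ((Mt + At * Ft) * Ftᴴ + Ft * (Mt + At * Ft)ᴴ)).PosSemidef := by
  have key : At * (Ft * Ftᴴ) + (Ft * Ftᴴ) * Atᴴ + Ft * Ftᴴ + Mbar -
      ((Mt + At * Ft) * Ftᴴ + Ft * (Mt + At * Ft)ᴴ)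
      = (Ft - Mt) * (Ft - Mt)ᴴ + (Mbar - Mt * Mtᴴ) := by
    simp only [Matrix.conjTranspose_add, Matrix.conjTranspose_mul, Matrix.conjTranspose_sub]
    noncomm_ring
  rw [key]
  exact (Matrix.posSemidef_self_mul_conjTranspose _).add h1

set_option maxHeartbeats 1000000 in
lemma leibniz_aux {n : ℕ} (A : ℝ → Matrix (Fin n) (Fin n) ℂ)
    (M : ℝ → Matrix (Fin n) (Fin n) ℂ) (hM : ContinuousOn M (Set.Ici 0))
    (Φ : ℝ → ℝ → Matrix (Fin n) (Fin n) ℂ)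
    (hΦcont : ContinuousOn (fun z : ℝ × ℝ => Φ z.1 z.2)
      {z : ℝ × ℝ | 0 ≤ z.2 ∧ z.2 ≤ z.1})
    (hΦt : ∀ τ : ℝ, 0 ≤ τ → ∀ t : ℝ, τ ≤ t →
      HasDerivAt (fun s => Φ s τ) (A t * Φ t τ) t)
    (hΦdiag : ∀ τ : ℝ, Φ τ τ = 1)
    (hΦtcont : ContinuousOn (fun z : ℝ × ℝ => A z.1 * Φ z.1 z.2)
      {z : ℝ × ℝ | 0 ≤ z.2 ∧ z.2 ≤ z.1})
    (F : ℝ → Matrix (Fin n) (Fin n) ℂ)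
    (hF : ∀ t : ℝ, F t = ∫ τ in (0:ℝ)..t, Φ t τ * M τ)
    (t₀ : ℝ) (ht₀ : 0 < t₀) :
    HasDerivAt F (M t₀ + A t₀ * F t₀) t₀ := by
  set Ψ : ℝ → ℝ → Matrix (Fin n) (Fin n) ℂ := fun s τ => Φ (max s τ) τ with hΨdef
  set D : ℝ → ℝ → Matrix (Fin n) (Fin n) ℂ := fun s τ => A (max s τ) * Φ (max s τ) τ with hDdef
  have hmap : Continuous (fun z : ℝ × ℝ => ((max z.1 z.2, z.2) : ℝ × ℝ)) := by fun_prop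
  have hmapsTo : ∀ z : ℝ × ℝ, z ∈ {z : ℝ × ℝ | 0 ≤ z.2} →
      ((max z.1 z.2, z.2) : ℝ × ℝ) ∈ {z : ℝ × ℝ | 0 ≤ z.2 ∧ z.2 ≤ z.1} :=
    fun z hz => ⟨hz, le_max_right _ _⟩
  have hΨc : ContinuousOn (fun z : ℝ × ℝ => Ψ z.1 z.2) {z : ℝ × ℝ | 0 ≤ z.2} :=
    hΦcont.comp hmap.continuousOn hmapsTo
  have hDc : ContinuousOn (fun z : ℝ × ℝ => D z.1 z.2) {z : ℝ × ℝ | 0 ≤ z.2} :=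
    hΦtcont.comp hmap.continuousOn hmapsTo
  have hMc : ContinuousOn (fun z : ℝ × ℝ => M z.2) {z : ℝ × ℝ | 0 ≤ z.2} :=
    hM.comp continuous_snd.continuousOn (fun z hz => hz)
  have hHc : ContinuousOn (fun z : ℝ × ℝ => Ψ z.1 z.2 * M z.2) {z : ℝ × ℝ | 0 ≤ z.2} :=
    hΨc.mul hMc
  have hDMc : ContinuousOn (fun z : ℝ × ℝ => D z.1 z.2 * M z.2) {z : ℝ × ℝ | 0 ≤ z.2} :=
    hDc.mul hMc
  have hslice : ∀ (f : ℝ × ℝ → Matrix (Fin n) (Fin n) ℂ),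
      ContinuousOn f {z : ℝ × ℝ | 0 ≤ z.2} → ∀ s : ℝ,
      ContinuousOn (fun τ => f (s, τ)) (Set.Ici 0) := fun f hf s =>
    hf.comp (Continuous.continuousOn (by fun_prop)) (fun τ hτ => hτ)
  have hHs : ∀ s, ContinuousOn (fun τ => Ψ s τ * M τ) (Set.Ici 0) := hslice _ hHc
  have hDMs : ∀ s, ContinuousOn (fun τ => D s τ * M τ) (Set.Ici 0) := hslice _ hDMc
  have hsub : ∀ {a b : ℝ}, 0 ≤ a → 0 ≤ b → Set.uIcc a b ⊆ Set.Ici 0 := by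
    intro a b ha hb x hx
    rcases Set.mem_uIcc.1 hx with ⟨h1, _⟩ | ⟨h1, _⟩
    · exact le_trans ha h1
    · exact le_trans hb h1
  have hIntH : ∀ s a b, 0 ≤ a → 0 ≤ b →
      IntervalIntegrable (fun τ => Ψ s τ * M τ) volume a b :=
    fun s a b ha hb => ((hHs s).mono (hsub ha hb)).intervalIntegrable
  have hIntDM : ∀ s a b, 0 ≤ a → 0 ≤ b →
      IntervalIntegrable (fun τ => D s τ * M τ) volume a b :=
    fun s a b ha hb => ((hDMs s).mono (hsub ha hb)).intervalIntegrable
  set G : ℝ → Matrix (Fin n) (Fin n) ℂ := fun s => ∫ τ in (0:ℝ)..s, Ψ s τ * M τ with hGdef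
  have hFG : ∀ s : ℝ, 0 ≤ s → F s = G s := by
    intro s hs
    rw [hF]
    refine intervalIntegral.integral_congr fun τ hτ => ?_
    rw [Set.uIcc_of_le hs] at hτ
    simp only [hΨdef]
    rw [max_eq_left hτ.2]
  have hFGev : F =ᶠ[nhds t₀] G := by
    filter_upwards [Ioi_mem_nhds ht₀] with s hs
    exact hFG s (le_of_lt hs)
  have hGt₀ : F t₀ = G t₀ := hFG t₀ ht₀.le
  rw [hGt₀, hFGev.hasDerivAt_iff]
  rw [hasDerivAt_iff_isLittleO, Asymptotics.isLittleO_iff]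
  intro c hc
  obtain ⟨CM, hCM⟩ : ∃ C, ∀ τ ∈ Set.Icc (0:ℝ) t₀, ‖M τ‖ ≤ C :=
    IsCompact.exists_bound_of_continuousOn isCompact_Icc (hM.mono Set.Icc_subset_Ici_self)
  have hCM0 : 0 ≤ CM := le_trans (norm_nonneg _) (hCM 0 ⟨le_refl _, ht₀.le⟩)
  obtain ⟨Cd, hCd⟩ : ∃ C, ∀ τ ∈ Set.Icc (0:ℝ) t₀, ‖D t₀ τ * M τ‖ ≤ C :=
    IsCompact.exists_bound_of_continuousOn isCompact_Icc
      ((hDMs t₀).mono Set.Icc_subset_Ici_self)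
  have hCd0 : 0 ≤ Cd := le_trans (norm_nonneg _) (hCd 0 ⟨le_refl _, ht₀.le⟩)
  have hden : (0:ℝ) < CM * t₀ + 1 := by positivity
  set ε : ℝ := c / (2 * (CM * t₀ + 1)) with hεdef
  have hε : 0 < ε := by positivity
  -- uniform continuity of D on a compact box
  set K : Set (ℝ × ℝ) := Set.Icc (t₀ - 1) (t₀ + 1) ×ˢ Set.Icc 0 (t₀ + 1) with hKdef
  have hKcpt : IsCompact K := isCompact_Icc.prod isCompact_Icc
  have hKsub : K ⊆ {z : ℝ × ℝ | 0 ≤ z.2} := fun z hz => hz.2.1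
  obtain ⟨δ₁, hδ₁pos, hδ₁⟩ := Metric.uniformContinuousOn_iff.1
    (hKcpt.uniformContinuousOn_of_continuous (hDc.mono hKsub)) ε hε
  -- continuity of H at (t₀, t₀)
  have hH0 : Ψ t₀ t₀ * M t₀ = M t₀ := by
    simp only [hΨdef]
    rw [max_self, hΦdiag, one_mul]
  obtain ⟨δ₂, hδ₂pos, hδ₂⟩ := Metric.continuousWithinAt_iff.1
    (hHc (t₀, t₀) (show (0:ℝ) ≤ t₀ from ht₀.le)) ε hε
  set δ : ℝ := min (min δ₁ δ₂) (min (min 1 t₀) (c / (2 * (Cd + 1)))) with hδdef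
  have hδpos : 0 < δ :=
    lt_min (lt_min hδ₁pos hδ₂pos) (lt_min (lt_min one_pos ht₀) (by positivity))
  have hδa : δ ≤ δ₁ := le_trans (min_le_left _ _) (min_le_left _ _)
  have hδb : δ ≤ δ₂ := le_trans (min_le_left _ _) (min_le_right _ _)
  have hδc : δ ≤ 1 := le_trans (min_le_right _ _) (le_trans (min_le_left _ _) (min_le_left _ _))
  have hδd : δ ≤ t₀ := le_trans (min_le_right _ _) (le_trans (min_le_left _ _) (min_le_right _ _))
  have hδe : δ ≤ c / (2 * (Cd + 1)) := le_trans (min_le_right _ _) (min_le_right _ _)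
  filter_upwards [Metric.ball_mem_nhds t₀ hδpos] with s hs
  rw [Metric.mem_ball, Real.dist_eq] at hs
  have hst : |s - t₀| < δ := hs
  have habs := abs_lt.1 hst
  have hs0 : 0 ≤ s := by linarith
  set m : ℝ := min s t₀ with hmdef
  have hm0 : 0 ≤ m := le_min hs0 ht₀.le
  have hms : m ≤ s := min_le_left _ _
  have hmt : m ≤ t₀ := min_le_right _ _
  have hmd : t₀ - m ≤ |s - t₀| := by
    rcases le_total s t₀ with h | h
    · have h1 : m = s := by rw [hmdef]; exact min_eq_left h
      rw [h1, abs_sub_comm, abs_of_nonneg (by linarith)]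
    · have h1 : m = t₀ := by rw [hmdef]; exact min_eq_right h
      rw [h1]
      simp [abs_nonneg]
  -- integrabilities
  have i1 : IntervalIntegrable (fun τ => Ψ s τ * M τ) volume 0 m := hIntH s 0 m le_rfl hm0
  have i1' : IntervalIntegrable (fun τ => Ψ s τ * M τ) volume m s := hIntH s m s hm0 hs0
  have i2 : IntervalIntegrable (fun τ => Ψ t₀ τ * M τ) volume 0 m := hIntH t₀ 0 m le_rfl hm0
  have i2' : IntervalIntegrable (fun τ => Ψ t₀ τ * M τ) volume m t₀ := hIntH t₀ m t₀ hm0 ht₀.le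
  have i3 : IntervalIntegrable (fun τ => D t₀ τ * M τ) volume 0 m := hIntDM t₀ 0 m le_rfl hm0
  have i3' : IntervalIntegrable (fun τ => D t₀ τ * M τ) volume m t₀ := hIntDM t₀ m t₀ hm0 ht₀.le
  have hsplits : G s = (∫ τ in (0:ℝ)..m, Ψ s τ * M τ) + ∫ τ in m..s, Ψ s τ * M τ :=
    (intervalIntegral.integral_add_adjacent_intervals i1 i1').symm
  have hsplitt : G t₀ = (∫ τ in (0:ℝ)..m, Ψ t₀ τ * M τ) + ∫ τ in m..t₀, Ψ t₀ τ * M τ :=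
    (intervalIntegral.integral_add_adjacent_intervals i2 i2').symm
  have hT1eq : (∫ τ in (0:ℝ)..m,
        (Ψ s τ * M τ - Ψ t₀ τ * M τ - (s - t₀) • (D t₀ τ * M τ)))
      = (∫ τ in (0:ℝ)..m, Ψ s τ * M τ) - (∫ τ in (0:ℝ)..m, Ψ t₀ τ * M τ)
        - (s - t₀) • ∫ τ in (0:ℝ)..m, D t₀ τ * M τ := by
    have hsm : IntervalIntegrable (fun τ => (s - t₀) • (D t₀ τ * M τ)) volume 0 m := by
      exact i3.smul (s - t₀)
    rw [intervalIntegral.integral_sub (i1.sub i2) hsm, intervalIntegral.integral_sub i1 i2]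
    congr 1
    exact intervalIntegral.integral_smul _ _
  have hpull : A t₀ * G t₀ = ∫ τ in (0:ℝ)..t₀, D t₀ τ * M τ := by
    have h1 := ((ContinuousLinearMap.mul ℝ (Matrix (Fin n) (Fin n) ℂ))
      (A t₀)).intervalIntegral_comp_comm (hIntH t₀ 0 t₀ le_rfl ht₀.le)
    simp only [ContinuousLinearMap.mul_apply'] at h1
    rw [← h1]
    refine intervalIntegral.integral_congr fun τ hτ => ?_
    rw [Set.uIcc_of_le ht₀.le] at hτ
    simp only [hΨdef, hDdef]
    rw [max_eq_left hτ.2, mul_assoc]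
  have hT2eq : (∫ τ in (0:ℝ)..m, D t₀ τ * M τ) - A t₀ * G t₀
      = -(∫ τ in m..t₀, D t₀ τ * M τ) := by
    rw [hpull, ← intervalIntegral.integral_add_adjacent_intervals i3 i3']
    abel
  have hE : G s - G t₀ - (s - t₀) • (M t₀ + A t₀ * G t₀)
      = (∫ τ in (0:ℝ)..m,
          (Ψ s τ * M τ - Ψ t₀ τ * M τ - (s - t₀) • (D t₀ τ * M τ)))
        + (s - t₀) • ((∫ τ in (0:ℝ)..m, D t₀ τ * M τ) - A t₀ * G t₀)
        + ((∫ τ in m..s, Ψ s τ * M τ) - (∫ τ in m..t₀, Ψ t₀ τ * M τ)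
            - (s - t₀) • M t₀) := by
    rw [hT1eq, smul_add, smul_sub, hsplits, hsplitt]
    abel
  -- bound T1
  have hT1b : ‖∫ τ in (0:ℝ)..m,
      (Ψ s τ * M τ - Ψ t₀ τ * M τ - (s - t₀) • (D t₀ τ * M τ))‖
      ≤ ε * |s - t₀| * CM * t₀ := by
    have key : ∀ τ ∈ Set.uIoc (0:ℝ) m,
        ‖Ψ s τ * M τ - Ψ t₀ τ * M τ - (s - t₀) • (D t₀ τ * M τ)‖
          ≤ ε * |s - t₀| * CM := by
      intro τ hτ
      rw [Set.uIoc_of_le hm0] at hτ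
      have hτ0 : (0:ℝ) ≤ τ := hτ.1.le
      have hτm : τ ≤ m := hτ.2
      have hτs : τ ≤ s := hτm.trans hms
      have hτt : τ ≤ t₀ := hτm.trans hmt
      have e1 : Ψ s τ = Φ s τ := by simp only [hΨdef]; rw [max_eq_left hτs]
      have e2 : Ψ t₀ τ = Φ t₀ τ := by simp only [hΨdef]; rw [max_eq_left hτt]
      have e3 : D t₀ τ = A t₀ * Φ t₀ τ := by simp only [hDdef]; rw [max_eq_left hτt]
      have hcontr : Continuous (fun r => D r τ) := by
        rw [← continuousOn_univ]
        exact hDc.comp (Continuous.continuousOn (continuous_id.prodMk continuous_const))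
          (fun r _ => hτ0)
      have hτmin : τ ≤ min t₀ s := by rw [min_comm]; exact hτm
      have hDint : IntervalIntegrable (fun r => A r * Φ r τ) volume t₀ s := by
        apply ContinuousOn.intervalIntegrable
        refine (hcontr.continuousOn).congr fun r hr => ?_
        have hτr : τ ≤ r := le_trans hτmin hr.1
        simp only [hDdef]
        rw [max_eq_left hτr]
      have hderiv : ∀ r ∈ Set.uIcc t₀ s, HasDerivAt (fun x => Φ x τ) (A r * Φ r τ) r :=
        fun r hr => hΦt τ hτ0 r (le_trans hτmin hr.1)
      have hftc : (∫ r in t₀..s, A r * Φ r τ) = Φ s τ - Φ t₀ τ :=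
        intervalIntegral.integral_eq_sub_of_hasDerivAt hderiv hDint
      have hrepr : Ψ s τ * M τ - Ψ t₀ τ * M τ - (s - t₀) • (D t₀ τ * M τ)
          = (∫ r in t₀..s, (A r * Φ r τ - A t₀ * Φ t₀ τ)) * M τ := by
        rw [intervalIntegral.integral_sub hDint intervalIntegrable_const, hftc,
          intervalIntegral.integral_const, e1, e2, e3, sub_mul, sub_mul,
          smul_mul_assoc, mul_assoc]
      rw [hrepr]
      have hbound : ∀ r ∈ Set.uIoc t₀ s, ‖A r * Φ r τ - A t₀ * Φ t₀ τ‖ ≤ ε := by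
        intro r hr
        have hr' : r ∈ Set.uIcc t₀ s := Set.uIoc_subset_uIcc hr
        have hτr : τ ≤ r := le_trans hτmin hr'.1
        have hrt : |r - t₀| ≤ |s - t₀| := by
          rcases le_total t₀ s with h | h
          · rw [Set.uIcc_of_le h] at hr'
            rw [abs_of_nonneg (by linarith [hr'.1]), abs_of_nonneg (by linarith)]
            linarith [hr'.2]
          · rw [Set.uIcc_of_ge h] at hr'
            rw [abs_of_nonpos (by linarith [hr'.2]), abs_of_nonpos (by linarith)]
            linarith [hr'.1]
        have hK1 : ((r, τ) : ℝ × ℝ) ∈ K := by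
          refine ⟨⟨?_, ?_⟩, ⟨hτ0, by linarith⟩⟩
          · have := abs_le.1 (hrt.trans (hst.le.trans hδc))
            linarith [this.1]
          · have := abs_le.1 (hrt.trans (hst.le.trans hδc))
            linarith [this.2]
        have hK2 : ((t₀, τ) : ℝ × ℝ) ∈ K := by
          refine ⟨⟨by linarith, by linarith⟩, ⟨hτ0, by linarith⟩⟩
        have hdist : dist ((r, τ) : ℝ × ℝ) ((t₀, τ) : ℝ × ℝ) < δ₁ := by
          rw [Prod.dist_eq]
          apply max_lt
          · rw [Real.dist_eq]
            exact lt_of_le_of_lt hrt (hst.trans_le hδa)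
          · rw [dist_self]
            exact hδ₁pos
        have := hδ₁ _ hK1 _ hK2 hdist
        rw [dist_eq_norm] at this
        have er : A r * Φ r τ = D r τ := by simp only [hDdef]; rw [max_eq_left hτr]
        have et : A t₀ * Φ t₀ τ = D t₀ τ := by simp only [hDdef]; rw [max_eq_left hτt]
        rw [er, et]
        exact this.le
      calc ‖(∫ r in t₀..s, (A r * Φ r τ - A t₀ * Φ t₀ τ)) * M τ‖
          ≤ ‖∫ r in t₀..s, (A r * Φ r τ - A t₀ * Φ t₀ τ)‖ * ‖M τ‖ := norm_mul_le _ _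
        _ ≤ (ε * |s - t₀|) * CM := by
            apply mul_le_mul _ (hCM τ ⟨hτ0, hτt⟩) (norm_nonneg _) (by positivity)
            exact intervalIntegral.norm_integral_le_of_norm_le_const hbound
        _ = ε * |s - t₀| * CM := by ring
    have h := intervalIntegral.norm_integral_le_of_norm_le_const key
    have hmabs : |m - 0| ≤ t₀ := by rw [sub_zero, abs_of_nonneg hm0]; exact hmt
    calc ‖∫ τ in (0:ℝ)..m,
        (Ψ s τ * M τ - Ψ t₀ τ * M τ - (s - t₀) • (D t₀ τ * M τ))‖
        ≤ ε * |s - t₀| * CM * |m - 0| := h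
      _ ≤ ε * |s - t₀| * CM * t₀ := by
          exact mul_le_mul_of_nonneg_left hmabs (by positivity)
  -- bound T2
  have hT2b : ‖(s - t₀) • ((∫ τ in (0:ℝ)..m, D t₀ τ * M τ) - A t₀ * G t₀)‖
      ≤ |s - t₀| * (Cd * |s - t₀|) := by
    rw [norm_smul, hT2eq, norm_neg, Real.norm_eq_abs]
    apply mul_le_mul_of_nonneg_left _ (abs_nonneg _)
    have hb : ∀ τ ∈ Set.uIoc m t₀, ‖D t₀ τ * M τ‖ ≤ Cd := by
      intro τ hτ
      rw [Set.uIoc_of_le hmt] at hτ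
      exact hCd τ ⟨le_trans hm0 hτ.1.le, hτ.2⟩
    calc ‖∫ τ in m..t₀, D t₀ τ * M τ‖ ≤ Cd * |t₀ - m| :=
        intervalIntegral.norm_integral_le_of_norm_le_const hb
      _ ≤ Cd * |s - t₀| := by
          apply mul_le_mul_of_nonneg_left _ hCd0
          rw [abs_of_nonneg (by linarith : (0:ℝ) ≤ t₀ - m)]
          exact hmd
  -- bound T3
  have hT3b : ‖(∫ τ in m..s, Ψ s τ * M τ) - (∫ τ in m..t₀, Ψ t₀ τ * M τ)
      - (s - t₀) • M t₀‖ ≤ ε * |s - t₀| := by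
    rcases le_total t₀ s with h | h
    · have hm : m = t₀ := by rw [hmdef]; exact min_eq_right h
      rw [hm, intervalIntegral.integral_same, sub_zero,
        show ((s - t₀) • M t₀ : Matrix (Fin n) (Fin n) ℂ)
          = ∫ τ in t₀..s, M t₀ from (intervalIntegral.integral_const _).symm,
        ← intervalIntegral.integral_sub (hIntH s t₀ s ht₀.le hs0) intervalIntegrable_const]
      have key : ∀ τ ∈ Set.uIoc t₀ s, ‖Ψ s τ * M τ - M t₀‖ ≤ ε := by
        intro τ hτ
        rw [Set.uIoc_of_le h] at hτ
        have hτ0 : (0:ℝ) ≤ τ := le_trans ht₀.le hτ.1.le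
        have hdist : dist ((s, τ) : ℝ × ℝ) ((t₀, t₀) : ℝ × ℝ) < δ₂ := by
          rw [Prod.dist_eq]
          apply max_lt
          · rw [Real.dist_eq]; exact hst.trans_le hδb
          · rw [Real.dist_eq]
            have h1 : |τ - t₀| ≤ |s - t₀| := by
              rw [abs_of_nonneg (by linarith [hτ.1] : (0:ℝ) ≤ τ - t₀),
                abs_of_nonneg (by linarith)]
              linarith [hτ.2]
            exact lt_of_le_of_lt h1 (hst.trans_le hδb)
        have := hδ₂ (show ((s, τ) : ℝ × ℝ) ∈ {z : ℝ × ℝ | 0 ≤ z.2} from hτ0) hdist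
        rw [dist_eq_norm] at this
        simp only at this
        rw [hH0] at this
        exact this.le
      exact intervalIntegral.norm_integral_le_of_norm_le_const key
    · have hm : m = s := by rw [hmdef]; exact min_eq_left h
      have hrw : (∫ τ in m..s, Ψ s τ * M τ) - (∫ τ in m..t₀, Ψ t₀ τ * M τ)
          - (s - t₀) • M t₀ = -(∫ τ in s..t₀, (Ψ t₀ τ * M τ - M t₀)) := by
        rw [hm, intervalIntegral.integral_same, zero_sub,
          intervalIntegral.integral_sub (hIntH t₀ s t₀ hs0 ht₀.le) intervalIntegrable_const,
          intervalIntegral.integral_const,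
          show s - t₀ = -(t₀ - s) by ring, neg_smul]
        abel
      rw [hrw, norm_neg]
      have key : ∀ τ ∈ Set.uIoc s t₀, ‖Ψ t₀ τ * M τ - M t₀‖ ≤ ε := by
        intro τ hτ
        rw [Set.uIoc_of_le h] at hτ
        have hτ0 : (0:ℝ) ≤ τ := le_trans hs0 hτ.1.le
        have hdist : dist ((t₀, τ) : ℝ × ℝ) ((t₀, t₀) : ℝ × ℝ) < δ₂ := by
          rw [Prod.dist_eq]
          apply max_lt
          · rw [dist_self]; exact hδ₂pos
          · rw [Real.dist_eq]
            have h1 : |τ - t₀| ≤ |s - t₀| := by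
              rw [abs_of_nonpos (by linarith [hτ.2] : τ - t₀ ≤ 0),
                abs_of_nonpos (by linarith)]
              linarith [hτ.1]
            exact lt_of_le_of_lt h1 (hst.trans_le hδb)
        have := hδ₂ (show ((t₀, τ) : ℝ × ℝ) ∈ {z : ℝ × ℝ | 0 ≤ z.2} from hτ0) hdist
        rw [dist_eq_norm] at this
        simp only at this
        rw [hH0] at this
        exact this.le
      calc ‖∫ τ in s..t₀, (Ψ t₀ τ * M τ - M t₀)‖ ≤ ε * |t₀ - s| :=
          intervalIntegral.norm_integral_le_of_norm_le_const key
        _ = ε * |s - t₀| := by rw [abs_sub_comm]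
  -- combine
  rw [hE, Real.norm_eq_abs]
  have hCdδ : Cd * |s - t₀| ≤ c / 2 := by
    have h1 : Cd * |s - t₀| ≤ Cd * (c / (2 * (Cd + 1))) :=
      mul_le_mul_of_nonneg_left (hst.le.trans hδe) hCd0
    have h2 : Cd * (c / (2 * (Cd + 1))) ≤ c / 2 := by
      rw [← mul_div_assoc, div_le_div_iff₀ (by positivity) two_pos]
      nlinarith [hc.le, hCd0]
    linarith
  have he2 : ε * (CM * t₀ + 1) = c / 2 := by
    rw [hεdef]
    field_simp
  refine le_trans norm_add₃_le ?_
  refine le_trans (add_le_add (add_le_add hT1b hT2b) hT3b) ?_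
  have e4 : |s - t₀| * (Cd * |s - t₀|) ≤ |s - t₀| * (c / 2) :=
    mul_le_mul_of_nonneg_left hCdδ (abs_nonneg _)
  have e6 : ε * |s - t₀| * CM * t₀ + ε * |s - t₀| = c / 2 * |s - t₀| := by
    rw [← he2]; ring
  linarith

/-- Lyapunov differential inequality for the factored Gramian
(Remark containing equations (Lya_W_dp)). -/
theorem lyapunov_inequality_factored_gramian
    {n : ℕ} (A : ℝ → Matrix (Fin n) (Fin n) ℂ) (hA : ContinuousOn A (Set.Ici 0))
    (M : ℝ → Matrix (Fin n) (Fin n) ℂ) (hM : ContinuousOn M (Set.Ici 0))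
    (Φ : ℝ → ℝ → Matrix (Fin n) (Fin n) ℂ)
    (hΦcont : ContinuousOn (fun z : ℝ × ℝ => Φ z.1 z.2)
      {z : ℝ × ℝ | 0 ≤ z.2 ∧ z.2 ≤ z.1})
    (hΦt : ∀ τ : ℝ, 0 ≤ τ → ∀ t : ℝ, τ ≤ t →
      HasDerivAt (fun s => Φ s τ) (A t * Φ t τ) t)
    (hΦdiag : ∀ τ : ℝ, Φ τ τ = 1)
    (hΦtcont : ContinuousOn (fun z : ℝ × ℝ => A z.1 * Φ z.1 z.2)
      {z : ℝ × ℝ | 0 ≤ z.2 ∧ z.2 ≤ z.1})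
    (Mbar : Matrix (Fin n) (Fin n) ℂ) (hMbarH : Mbar.IsHermitian)
    (hMbar : ∀ t : ℝ, 0 ≤ t → Matrix.PosSemidef (Mbar - M t * (M t)ᴴ))
    -- F(t) = ∫₀^t Φ(t,τ) M(τ) dτ and W(t) = F(t) F(t)^*
    (F W : ℝ → Matrix (Fin n) (Fin n) ℂ)
    (hF : ∀ t : ℝ, F t = ∫ τ in (0:ℝ)..t, Φ t τ * M τ)
    (hW : ∀ t : ℝ, W t = F t * (F t)ᴴ) :
    ∀ t : ℝ, 0 < t →
      ∃ W' : Matrix (Fin n) (Fin n) ℂ,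
        HasDerivAt W W' t ∧
        Matrix.PosSemidef
          (A t * W t + W t * (A t)ᴴ + W t + Mbar - W') := by
  intro t ht
  have hd := leibniz_aux A M hM Φ hΦcont hΦt hΦdiag hΦtcont F hF t ht
  have hdc : HasDerivAt (fun s => (F s)ᴴ) (M t + A t * F t)ᴴ t := by
    simpa [Matrix.star_eq_conjTranspose] using hd.star
  have hW' : HasDerivAt W
      ((M t + A t * F t) * (F t)ᴴ + F t * (M t + A t * F t)ᴴ) t := by
    have h2 := hd.mul hdc
    have hfun : (fun y => F y * (F y)ᴴ) = W := funext fun y => (hW y).symm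
    rw [← hfun]
    exact h2
  refine ⟨_, hW', ?_⟩
  rw [hW]
  exact psd_aux (F t) (M t) (A t) Mbar (hMbar t ht.le)
end

section
/- Vanishing Cesàro average of the cross terms between the oscillatory and the state-transition-weighted frequency kernels (Proposition 1, second list, item (3)). Let A ∈ ℂ^{n×n} be Hurwitz and B ∈ ℂ^{n×p}, and let Ω = [a,b] ⊂ ℝ be a compact interval. For s ≥ 0 and ω ∈ ℝ define V₁(s,ω) = e^{iωs} (iωI − A)^{-1} B and V₂(s,ω) = −exp(As) (iωI − A)^{-1} B. Then lim_{t→∞} (1/t) ∫₀^t [ ∬_{Ω×Ω} He( V₁(s,ω) V₂(s,ω̃)^* ) dω dω̃ ] ds = 0, where the limit is the zero n×n matrix (equivalently, the limit holds in operator norm). -/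
open Matrix MeasureTheory
open scoped Matrix.Norms.L2Operator

/-- A complex square matrix is Hurwitz if every eigenvalue (spectrum element)
has negative real part. -/
def IsHurwitz {n : ℕ} (A : Matrix (Fin n) (Fin n) ℂ) : Prop :=
  ∀ μ ∈ spectrum ℂ A, μ.re < 0

/-- `He M = M + M^*`. -/
noncomputable def He {n : ℕ} (M : Matrix (Fin n) (Fin n) ℂ) :
    Matrix (Fin n) (Fin n) ℂ := M + Mᴴ

section Decay

lemma poly_le_exp (k : ℕ) {ε : ℝ} (hε : 0 < ε) :
    ∃ C : ℝ, 0 < C ∧ ∀ s : ℝ, 0 ≤ s → (1 + s) ^ k ≤ C * Real.exp (ε * s) := by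
  set c : ℝ := max 1 ((k + 1) / ε) with hc
  have hc1 : (1 : ℝ) ≤ c := le_max_left _ _
  have hc2 : (k + 1) / ε ≤ c := le_max_right _ _
  refine ⟨c ^ k, by positivity, fun s hs => ?_⟩
  have hkpos : (0 : ℝ) < k + 1 := by positivity
  have h1 : 1 + s ≤ c * (1 + (ε / (k + 1)) * s) := by
    have hnn : (0:ℝ) ≤ ε/(k+1) := by positivity
    have : (1 : ℝ) ≤ c * (ε / (k + 1)) := by
      calc (1 : ℝ) = (k+1)/ε * (ε/(k+1)) := by field_simp
        _ ≤ c * (ε/(k+1)) := mul_le_mul_of_nonneg_right hc2 hnn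
    nlinarith [mul_nonneg (sub_nonneg.mpr this) hs]
  have h2 : 1 + (ε / (k + 1)) * s ≤ Real.exp ((ε / (k + 1)) * s) := by
    have := Real.add_one_le_exp ((ε / (k + 1)) * s)
    linarith
  calc (1 + s) ^ k ≤ (c * Real.exp ((ε / (k + 1)) * s)) ^ k := by
        apply pow_le_pow_left₀ (by linarith)
        calc 1 + s ≤ c * (1 + (ε / (k + 1)) * s) := h1
          _ ≤ c * Real.exp ((ε / (k + 1)) * s) := by
              apply mul_le_mul_of_nonneg_left h2 (by linarith)
    _ = c ^ k * Real.exp ((ε / (k + 1)) * s * k) := by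
        rw [mul_pow, ← Real.exp_nat_mul]; ring_nf
    _ ≤ c ^ k * Real.exp (ε * s) := by
        apply mul_le_mul_of_nonneg_left _ (by positivity)
        apply Real.exp_le_exp.mpr
        rw [div_mul_eq_mul_div, div_mul_eq_mul_div, div_le_iff₀ hkpos]
        nlinarith [mul_nonneg (mul_nonneg hε.le hs) (Nat.cast_nonneg (α := ℝ) k)]

variable {E : Type*} [NormedAddCommGroup E] [NormedSpace ℂ E] [CompleteSpace E]

lemma vec_decay (L : E →L[ℂ] E) {μ : ℂ} (hμ : μ.re < 0) (k : ℕ) (x : E)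
    (hx : ((L - μ • 1) ^ k) x = 0) :
    ∃ C : ℝ, 0 ≤ C ∧ ∀ s : ℝ, 0 ≤ s →
      ‖NormedSpace.exp (s • L) x‖ ≤ C * Real.exp ((μ.re / 2) * s) := by
  classical
  set N : E →L[ℂ] E := L - μ • 1 with hN
  set Cx : ℝ := ∑ j ∈ Finset.range k, ‖(N ^ j) x‖ with hCx
  have hCx0 : 0 ≤ Cx := Finset.sum_nonneg fun j _ => norm_nonneg _
  have key : ∀ s : ℝ, 0 ≤ s →
      ‖NormedSpace.exp (s • L) x‖ ≤ Real.exp (μ.re * s) * ((1 + s) ^ k * Cx) := by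
    intro s hs
    have hsplit : s • L = ((s : ℂ) * μ) • (1 : E →L[ℂ] E) + s • N := by
      rw [hN, smul_sub]
      have h1 : ((s : ℂ) * μ) • (1 : E →L[ℂ] E) = s • (μ • (1 : E →L[ℂ] E)) := by
        rw [show ((s:ℂ)*μ) = s • μ from (Complex.real_smul).symm, smul_assoc]
      rw [h1]; abel
    have hcomm : Commute (((s : ℂ) * μ) • (1 : E →L[ℂ] E)) (s • N) :=
      ((Commute.one_left N).smul_right s).smul_left _
    have hexp : NormedSpace.exp (s • L) =
        Complex.exp ((s : ℂ) * μ) • NormedSpace.exp (s • N) := by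
      letI : NormedAlgebra ℚ (E →L[ℂ] E) := .restrictScalars ℚ ℂ _
      rw [hsplit, NormedSpace.exp_add_of_commute hcomm]
      rw [← Algebra.algebraMap_eq_smul_one ((s:ℂ) * μ), ← NormedSpace.algebraMap_exp_comm,
        Algebra.algebraMap_eq_smul_one, ← Complex.exp_eq_exp_ℂ, smul_mul_assoc, one_mul]
    have hNsum := NormedSpace.expSeries_summable' (𝕂 := ℂ) (s • N)
    have happ : NormedSpace.exp (s • N) x
        = ∑' j : ℕ, (((j.factorial : ℂ))⁻¹ • (s • N) ^ j) x := by
      rw [NormedSpace.exp_eq_tsum (𝕂 := ℂ)]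
      exact (ContinuousLinearMap.apply ℂ E x).map_tsum hNsum
    have hterm : ∀ j : ℕ, (((j.factorial : ℂ))⁻¹ • (s • N) ^ j) x
        = ((j.factorial : ℂ))⁻¹ • (s ^ j) • ((N ^ j) x) := by
      intro j
      rw [smul_pow]
      simp [ContinuousLinearMap.smul_apply]
    have hzero : ∀ j ∉ Finset.range k, (((j.factorial : ℂ))⁻¹ • (s • N) ^ j) x = 0 := by
      intro j hj
      rw [hterm j]
      have hjk : k ≤ j := by simpa using hj
      have hz : (N ^ j) x = 0 := by
        rw [show j = (j - k) + k by omega, pow_add, ContinuousLinearMap.mul_apply, hx, map_zero]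
      rw [hz, smul_zero, smul_zero]
    have hfin : NormedSpace.exp (s • N) x
        = ∑ j ∈ Finset.range k, ((j.factorial : ℂ))⁻¹ • (s ^ j) • ((N ^ j) x) := by
      rw [happ, tsum_eq_sum hzero]
      exact Finset.sum_congr rfl fun j _ => hterm j
    have hbound : ‖NormedSpace.exp (s • N) x‖ ≤ (1 + s) ^ k * Cx := by
      rw [hfin, hCx, Finset.mul_sum]
      refine (norm_sum_le _ _).trans (Finset.sum_le_sum fun j hj => ?_)
      rw [norm_smul, norm_smul]
      have h1 : ‖((j.factorial : ℂ))⁻¹‖ ≤ 1 := by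
        rw [norm_inv]
        apply inv_le_one_of_one_le₀
        rw [Complex.norm_natCast]
        exact_mod_cast Nat.one_le_iff_ne_zero.mpr (Nat.factorial_ne_zero j)
      have h2 : ‖s ^ j‖ ≤ (1 + s) ^ k := by
        rw [Real.norm_eq_abs, abs_of_nonneg (pow_nonneg hs j)]
        calc s ^ j ≤ (1 + s) ^ j := pow_le_pow_left₀ hs (by linarith) j
          _ ≤ (1 + s) ^ k := pow_le_pow_right₀ (by linarith)
              (le_of_lt (Finset.mem_range.mp hj))
      calc ‖((j.factorial : ℂ))⁻¹‖ * (‖s ^ j‖ * ‖(N ^ j) x‖)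
          ≤ 1 * ((1 + s) ^ k * ‖(N ^ j) x‖) := by
            apply mul_le_mul h1 _ (by positivity) zero_le_one
            exact mul_le_mul_of_nonneg_right h2 (norm_nonneg _)
        _ = (1 + s) ^ k * ‖(N ^ j) x‖ := one_mul _
    rw [hexp, ContinuousLinearMap.smul_apply, norm_smul]
    have hcnorm : ‖Complex.exp ((s:ℂ) * μ)‖ = Real.exp (μ.re * s) := by
      rw [Complex.norm_exp]
      congr 1
      simp [mul_comm]
    rw [hcnorm]
    exact mul_le_mul_of_nonneg_left hbound (Real.exp_nonneg _)
  obtain ⟨C, hC0, hCb⟩ := poly_le_exp k (ε := -μ.re / 2) (by linarith)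
  refine ⟨C * Cx, by positivity, fun s hs => ?_⟩
  calc ‖NormedSpace.exp (s • L) x‖ ≤ Real.exp (μ.re * s) * ((1 + s) ^ k * Cx) := key s hs
    _ ≤ Real.exp (μ.re * s) * ((C * Real.exp ((-μ.re / 2) * s)) * Cx) := by
        apply mul_le_mul_of_nonneg_left _ (Real.exp_nonneg _)
        exact mul_le_mul_of_nonneg_right (hCb s hs) hCx0
    _ = C * Cx * (Real.exp (μ.re * s) * Real.exp ((-μ.re / 2) * s)) := by ring
    _ = C * Cx * Real.exp ((μ.re / 2) * s) := by rw [← Real.exp_add]; ring_nf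

lemma vecg_decay [FiniteDimensional ℂ E] (L : E →L[ℂ] E)
    (hL : ∀ μ : ℂ, Module.End.HasEigenvalue (↑L : E →ₗ[ℂ] E) μ → μ.re < 0) (x : E) :
    ∃ g : ℝ → ℝ, IntegrableOn g (Set.Ioi 0) ∧ ∀ s : ℝ, 0 ≤ s →
      ‖NormedSpace.exp (s • L) x‖ ≤ g s := by
  classical
  have htop := Module.End.iSup_maxGenEigenspace_eq_top (↑L : E →ₗ[ℂ] E)
  have hx : x ∈ (⨆ μ : ℂ, Module.End.maxGenEigenspace (↑L : E →ₗ[ℂ] E) μ) := by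
    rw [htop]; trivial
  obtain ⟨c, hc, hsum⟩ := (Submodule.mem_iSup_iff_exists_finsupp _ x).mp hx
  have hμs : ∀ μ ∈ c.support, ∃ Cμ : ℝ, 0 ≤ Cμ ∧ μ.re < 0 ∧ ∀ s : ℝ, 0 ≤ s →
      ‖NormedSpace.exp (s • L) (c μ)‖ ≤ Cμ * Real.exp ((μ.re / 2) * s) := by
    intro μ hmem
    have hmm := hc μ
    rw [Module.End.mem_maxGenEigenspace] at hmm
    obtain ⟨k, hk⟩ := hmm
    have hmemk : c μ ∈ Module.End.genEigenspace (↑L : E →ₗ[ℂ] E) μ (k : ℕ∞) :=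
      Module.End.mem_genEigenspace_nat.mpr (LinearMap.mem_ker.mpr hk)
    have heig : Module.End.HasEigenvalue (↑L : E →ₗ[ℂ] E) μ := by
      refine Module.End.hasEigenvalue_of_hasGenEigenvalue (k := k) (fun hbot => ?_)
      rw [hbot] at hmemk
      exact Finsupp.mem_support_iff.mp hmem (Submodule.mem_bot ℂ |>.mp hmemk)
    have hμre := hL μ heig
    have hfun : ⇑(L - μ • 1 : E →L[ℂ] E) = ⇑((↑L : E →ₗ[ℂ] E) - μ • 1) := by
      funext y; simp
    have hk' : (((L - μ • 1 : E →L[ℂ] E) ^ k)) (c μ) = 0 := by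
      show (⇑((L - μ • 1 : E →L[ℂ] E) ^ k)) (c μ) = 0
      have e : ((L - μ • 1 : E →L[ℂ] E) : E →ₗ[ℂ] E) = (↑L : E →ₗ[ℂ] E) - μ • 1 := by
        ext y; simp
      rw [← ContinuousLinearMap.coe_coe, ContinuousLinearMap.toLinearMap_pow, e]
      exact hk
    obtain ⟨C, hC0, hCb⟩ := vec_decay L hμre k (c μ) hk'
    exact ⟨C, hC0, hμre, hCb⟩
  choose! Cμ hC0 hCre hCb using hμs
  refine ⟨fun s => ∑ μ ∈ c.support, Cμ μ * Real.exp ((μ.re / 2) * s), ?_, ?_⟩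
  · apply integrable_finset_sum
    intro μ hmem
    have h1 : IntegrableOn (fun s : ℝ => Real.exp (-(-(μ.re / 2)) * s)) (Set.Ioi 0) :=
      exp_neg_integrableOn_Ioi 0 (by linarith [hCre μ hmem])
    simp only [neg_neg] at h1
    exact h1.const_mul _
  · intro s hs
    have hxs : x = ∑ μ ∈ c.support, c μ := by rw [← hsum]; rfl
    calc ‖NormedSpace.exp (s • L) x‖
        = ‖∑ μ ∈ c.support, NormedSpace.exp (s • L) (c μ)‖ := by rw [hxs, map_sum]
      _ ≤ ∑ μ ∈ c.support, ‖NormedSpace.exp (s • L) (c μ)‖ := norm_sum_le _ _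
      _ ≤ ∑ μ ∈ c.support, Cμ μ * Real.exp ((μ.re / 2) * s) :=
          Finset.sum_le_sum fun μ hm => hCb μ hm s hs

lemma euclid_coord_le {n : ℕ} (x : EuclideanSpace ℂ (Fin n)) (i : Fin n) : ‖x i‖ ≤ ‖x‖ := by
  rw [EuclideanSpace.norm_eq]
  rw [show ‖x i‖ = Real.sqrt (‖x i‖^2) by rw [Real.sqrt_sq (norm_nonneg _)]]
  apply Real.sqrt_le_sqrt
  exact Finset.single_le_sum (f := fun j => ‖x j‖^2) (fun j _ => sq_nonneg _) (Finset.mem_univ i)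

lemma opnorm_le_sum {n : ℕ} (T : EuclideanSpace ℂ (Fin n) →L[ℂ] EuclideanSpace ℂ (Fin n)) :
    ‖T‖ ≤ ∑ i, ‖T ((EuclideanSpace.basisFun (Fin n) ℂ) i)‖ := by
  refine T.opNorm_le_bound (Finset.sum_nonneg fun i _ => norm_nonneg _) fun x => ?_
  set b := EuclideanSpace.basisFun (Fin n) ℂ with hb
  have hx : x = ∑ i, b.repr x i • b i := (b.sum_repr x).symm
  calc ‖T x‖ = ‖∑ i, b.repr x i • T (b i)‖ := by
        conv_lhs => rw [hx]
        rw [map_sum]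
        simp only [_root_.map_smul]
    _ ≤ ∑ i, ‖b.repr x i • T (b i)‖ := norm_sum_le _ _
    _ = ∑ i, ‖b.repr x i‖ * ‖T (b i)‖ := by simp [norm_smul]
    _ ≤ ∑ i, ‖x‖ * ‖T (b i)‖ := by
        refine Finset.sum_le_sum fun i _ => mul_le_mul_of_nonneg_right ?_ (norm_nonneg _)
        calc ‖b.repr x i‖ ≤ ‖b.repr x‖ := euclid_coord_le _ i
          _ = ‖x‖ := b.repr.norm_map x
    _ = (∑ i, ‖T (b i)‖) * ‖x‖ := by rw [← Finset.mul_sum]; ring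

set_option maxHeartbeats 1000000 in
lemma matexp_decay {n : ℕ} (A : Matrix (Fin n) (Fin n) ℂ) (hA : IsHurwitz A) :
    ∃ g : ℝ → ℝ, IntegrableOn g (Set.Ioi 0) ∧ ∀ s : ℝ, 0 ≤ s →
      ‖NormedSpace.exp (s • A)‖ ≤ g s := by
  classical
  letI : NormedAlgebra ℚ (Matrix (Fin n) (Fin n) ℂ) := .restrictScalars ℚ ℂ _
  set L := Matrix.toEuclideanCLM (𝕜 := ℂ) A with hL
  have hLspec : ∀ μ : ℂ, Module.End.HasEigenvalue
      (↑L : EuclideanSpace ℂ (Fin n) →ₗ[ℂ] EuclideanSpace ℂ (Fin n)) μ → μ.re < 0 := by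
    intro μ hμ
    obtain ⟨v, hv⟩ := hμ.exists_hasEigenvector
    have hv1 : L v = μ • v := Module.End.mem_eigenspace_iff.mp hv.1
    set w : Fin n → ℂ := (WithLp.equiv 2 (Fin n → ℂ)) v with hw
    have hAw : A *ᵥ w = μ • w := by
      rw [hw]; change A *ᵥ WithLp.ofLp v = μ • WithLp.ofLp v
      rw [← Matrix.ofLp_toEuclideanCLM, ← hL, hv1]
      rfl
    have hker : ((μ • (1 : Matrix (Fin n) (Fin n) ℂ) - A)) *ᵥ w = 0 := by
      rw [Matrix.sub_mulVec, Matrix.smul_mulVec, Matrix.one_mulVec, hAw, sub_self]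
    have hw0 : w ≠ 0 := by
      intro h
      apply hv.2
      have := congrArg (WithLp.equiv 2 (Fin n → ℂ)).symm h
      simpa [hw] using this
    have hdet : (μ • (1 : Matrix (Fin n) (Fin n) ℂ) - A).det = 0 :=
      (Matrix.exists_mulVec_eq_zero_iff).mp ⟨w, hw0, hker⟩
    refine hA μ ?_
    rw [spectrum.mem_iff]
    intro hunit
    rw [Algebra.algebraMap_eq_smul_one] at hunit
    exact ((Matrix.isUnit_iff_isUnit_det _).mp hunit).ne_zero hdet
  have hvec := fun i => vecg_decay L hLspec ((EuclideanSpace.basisFun (Fin n) ℂ) i)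
  choose g hgint hgb using hvec
  refine ⟨fun s => ∑ i, g i s, integrable_finset_sum _ (fun i _ => hgint i), fun s hs => ?_⟩
  have hsA : s • A = (s:ℂ) • A := by ext i j; simp [Complex.real_smul]
  have hsL : s • L = (s:ℂ) • L := by
    ext v
    simp only [ContinuousLinearMap.smul_apply]
    rw [← Complex.coe_algebraMap, algebraMap_smul]
  have hiso : Isometry (fun M : Matrix (Fin n) (Fin n) ℂ => Matrix.toEuclideanCLM (𝕜 := ℂ) M) :=
    AddMonoidHomClass.isometry_of_norm _ (fun x => rfl)
  have h2 : Matrix.toEuclideanCLM (𝕜 := ℂ) (s • A) = s • L := by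
    rw [hsA, hsL]
    exact _root_.map_smul (Matrix.toEuclideanCLM (𝕜 := ℂ)) (s:ℂ) A
  have hmap : Matrix.toEuclideanCLM (𝕜 := ℂ) (NormedSpace.exp (s • A))
      = NormedSpace.exp (s • L) := by
    have h := NormedSpace.map_exp (Matrix.toEuclideanCLM (𝕜 := ℂ) (n := Fin n)).toRingEquiv
      hiso.continuous (s • A)
    rw [← h2]
    exact h
  have hnorm : ‖NormedSpace.exp (s • A)‖ = ‖NormedSpace.exp (s • L)‖ := by
    rw [← hmap]; rfl
  rw [hnorm]
  exact le_trans (opnorm_le_sum _) (Finset.sum_le_sum fun i _ => hgb i s hs)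

end Decay

section LinMaps

variable {n p : ℕ}

/-- `X ↦ He (X * Wᴴ)` as an `ℝ`-linear map. -/
noncomputable def heL (W : Matrix (Fin n) (Fin p) ℂ) :
    Matrix (Fin n) (Fin p) ℂ →ₗ[ℝ] Matrix (Fin n) (Fin n) ℂ where
  toFun X := He (X * Wᴴ)
  map_add' X Y := by
    simp only [He, Matrix.add_mul, Matrix.conjTranspose_add]
    abel
  map_smul' r X := by
    simp only [He, Matrix.smul_mul, Matrix.conjTranspose_smul, star_trivial,
      RingHom.id_apply, smul_add]

/-- `X ↦ He (V * Xᴴ)` as an `ℝ`-linear map. -/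
noncomputable def heR (V : Matrix (Fin n) (Fin p) ℂ) :
    Matrix (Fin n) (Fin p) ℂ →ₗ[ℝ] Matrix (Fin n) (Fin n) ℂ where
  toFun X := He (V * Xᴴ)
  map_add' X Y := by
    simp only [He, Matrix.conjTranspose_add, Matrix.mul_add]
    abel
  map_smul' r X := by
    simp only [He, Matrix.conjTranspose_smul, star_trivial, Matrix.mul_smul,
      RingHom.id_apply, smul_add]

/-- `X ↦ -(E * X)` as an `ℝ`-linear map. -/
noncomputable def negMulL (E : Matrix (Fin n) (Fin n) ℂ) :
    Matrix (Fin n) (Fin p) ℂ →ₗ[ℝ] Matrix (Fin n) (Fin p) ℂ where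
  toFun X := -(E * X)
  map_add' X Y := by simp [Matrix.mul_add]; abel
  map_smul' r X := by simp [Matrix.mul_smul]

end LinMaps

set_option maxHeartbeats 2000000 in
/-- Vanishing Cesàro average of the cross terms between the oscillatory and the
state-transition-weighted frequency kernels
(Proposition 1, second list, item (3)). -/
theorem cesaro_average_V1_V2_cross_vanishes
    {n p : ℕ} (A : Matrix (Fin n) (Fin n) ℂ) (hA : IsHurwitz A)
    (B : Matrix (Fin n) (Fin p) ℂ) (a b : ℝ) (hab : a ≤ b)
    (V₁ V₂ : ℝ → ℝ → Matrix (Fin n) (Fin p) ℂ)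
    (hV₁ : ∀ (s ω : ℝ), V₁ s ω =
      Complex.exp (Complex.I * ω * s) •
        (((Complex.I * ω) • (1 : Matrix (Fin n) (Fin n) ℂ) - A)⁻¹ * B))
    (hV₂ : ∀ (s ω : ℝ), V₂ s ω =
      -(NormedSpace.exp (s • A) *
          ((Complex.I * ω) • (1 : Matrix (Fin n) (Fin n) ℂ) - A)⁻¹ * B)) :
    Filter.Tendsto
      (fun t : ℝ => (1 / t) •
        ∫ s in (0:ℝ)..t,
          ∫ ω in Set.Icc a b, ∫ ω' in Set.Icc a b,
            He (V₁ s ω * (V₂ s ω')ᴴ))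
      Filter.atTop (nhds 0) := by
  classical
  letI : NormedAlgebra ℚ (Matrix (Fin n) (Fin n) ℂ) := .restrictScalars ℚ ℂ _
  -- the resolvent
  set M : ℝ → Matrix (Fin n) (Fin n) ℂ :=
    fun ω => (Complex.I * ω) • (1 : Matrix (Fin n) (Fin n) ℂ) - A with hM
  have hMunit : ∀ ω : ℝ, IsUnit (M ω) := by
    intro ω
    by_contra hcon
    have hspec : (Complex.I * ω) ∈ spectrum ℂ A := by
      rw [spectrum.mem_iff, Algebra.algebraMap_eq_smul_one]
      exact hcon
    have := hA _ hspec
    simp at this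
  have hMdet : ∀ ω : ℝ, (M ω).det ≠ 0 := fun ω =>
    ((Matrix.isUnit_iff_isUnit_det _).mp (hMunit ω)).ne_zero
  have hMcont : Continuous M := by
    apply Continuous.sub _ continuous_const
    exact (continuous_const.mul Complex.continuous_ofReal).smul continuous_const
  set R : ℝ → Matrix (Fin n) (Fin n) ℂ := fun ω => (M ω)⁻¹ with hR
  have hRcont : Continuous R := by
    have hre : R = fun ω => ((M ω).det)⁻¹ • (M ω).adjugate := by
      funext ω
      show (M ω)⁻¹ = ((M ω).det)⁻¹ • (M ω).adjugate
      rw [Matrix.inv_def, Ring.inverse_eq_inv']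
    rw [hre]
    exact (hMcont.matrix_det.inv₀ hMdet).smul hMcont.matrix_adjugate
  set RB : ℝ → Matrix (Fin n) (Fin p) ℂ := fun ω => R ω * B with hRB
  have hRBcont : Continuous RB := hRcont.matrix_mul continuous_const
  obtain ⟨K₀, hK₀⟩ : ∃ K₀, ∀ ω ∈ Set.Icc a b, ‖RB ω‖ ≤ K₀ :=
    isCompact_Icc.exists_bound_of_continuousOn hRBcont.continuousOn
  have hK₀0 : 0 ≤ K₀ := le_trans (norm_nonneg (RB a)) (hK₀ a ⟨le_refl a, hab⟩)
  have hRBint : IntegrableOn RB (Set.Icc a b) := hRBcont.integrableOn_Icc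
  set Q : Matrix (Fin n) (Fin p) ℂ := ∫ ω in Set.Icc a b, RB ω with hQ
  set P : ℝ → Matrix (Fin n) (Fin p) ℂ :=
    fun s => ∫ ω in Set.Icc a b, Complex.exp (Complex.I * ω * s) • RB ω with hP
  -- the exponential factor and its continuity
  set Ex : ℝ → Matrix (Fin n) (Fin n) ℂ := fun s => NormedSpace.exp (s • A) with hEx
  have hExcont : Continuous Ex :=
    NormedSpace.exp_continuous.comp (continuous_id.smul continuous_const)
  -- the closed form
  set G : ℝ → Matrix (Fin n) (Fin n) ℂ :=
    fun s => -(He (P s * (Ex s * Q)ᴴ)) with hG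
  -- pointwise norm of the oscillatory factor
  have hosc : ∀ (s ω : ℝ), ‖Complex.exp (Complex.I * ω * s) • RB ω‖ = ‖RB ω‖ := by
    intro s ω
    rw [norm_smul, Complex.norm_exp]
    have : (Complex.I * ω * s).re = 0 := by simp
    rw [this, Real.exp_zero, one_mul]
  -- continuity of P via dominated convergence
  have hPcont : Continuous P := by
    rw [hP]
    apply continuous_of_dominated (bound := fun ω => ‖RB ω‖)
    · intro s
      exact (((continuous_const.mul Complex.continuous_ofReal).mul
        continuous_const).cexp.smul hRBcont).aestronglyMeasurable
    · intro s
      filter_upwards with ω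
      rw [hosc s ω]
    · exact hRBint.norm
    · filter_upwards with ω
      exact ((continuous_const.mul Complex.continuous_ofReal).cexp).smul continuous_const
  -- integrability of the V functions
  have hV₁eq : ∀ s : ℝ, (fun ω => V₁ s ω)
      = fun ω : ℝ => Complex.exp (Complex.I * ω * s) • RB ω := by
    intro s; funext ω; rw [hV₁ s ω]
  have hV₂eq : ∀ s : ℝ, (fun ω' => V₂ s ω') = fun ω' => -(Ex s * (RB ω')) := by
    intro s; funext ω'
    rw [hV₂ s ω', Matrix.mul_assoc]
  have hV₁int : ∀ s : ℝ, IntegrableOn (fun ω => V₁ s ω) (Set.Icc a b) := by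
    intro s
    rw [hV₁eq s]
    exact (((continuous_const.mul Complex.continuous_ofReal).mul
      continuous_const).cexp.smul hRBcont).integrableOn_Icc
  have hV₂int : ∀ s : ℝ, IntegrableOn (fun ω' => V₂ s ω') (Set.Icc a b) := by
    intro s
    rw [hV₂eq s]
    exact ((continuous_const.matrix_mul hRBcont).neg).integrableOn_Icc
  -- the inner integral
  have hWeq : ∀ s : ℝ, (∫ ω' in Set.Icc a b, V₂ s ω') = -(Ex s * Q) := by
    intro s
    have h1 : (fun ω' => V₂ s ω')
        = fun ω' => (negMulL (Ex s)).toContinuousLinearMap (RB ω') := by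
      rw [hV₂eq s]; funext ω'; simp [negMulL]
    rw [h1, ContinuousLinearMap.integral_comp_comm _ hRBint]
    simp [negMulL, hQ]
  have hinner : ∀ (s ω : ℝ), (∫ ω' in Set.Icc a b, He (V₁ s ω * (V₂ s ω')ᴴ))
      = He (V₁ s ω * (-(Ex s * Q))ᴴ) := by
    intro s ω
    have h1 : (fun ω' => He (V₁ s ω * (V₂ s ω')ᴴ))
        = fun ω' => (heR (V₁ s ω)).toContinuousLinearMap (V₂ s ω') := by
      funext ω'; simp [heR]
    rw [h1, ContinuousLinearMap.integral_comp_comm _ (hV₂int s), hWeq s]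
    simp [heR]
  have houter : ∀ s : ℝ, (∫ ω in Set.Icc a b, He (V₁ s ω * (-(Ex s * Q))ᴴ))
      = He (P s * (-(Ex s * Q))ᴴ) := by
    intro s
    have h1 : (fun ω => He (V₁ s ω * (-(Ex s * Q))ᴴ))
        = fun ω => (heL (-(Ex s * Q))).toContinuousLinearMap (V₁ s ω) := by
      funext ω; simp [heL]
    rw [h1, ContinuousLinearMap.integral_comp_comm _ (hV₁int s)]
    have h2 : (∫ ω in Set.Icc a b, V₁ s ω) = P s := by
      rw [hV₁eq s, hP]
    simp [heL, h2]
  have hFeqG : ∀ s : ℝ,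
      (∫ ω in Set.Icc a b, ∫ ω' in Set.Icc a b, He (V₁ s ω * (V₂ s ω')ᴴ)) = G s := by
    intro s
    have h1 : (fun ω => ∫ ω' in Set.Icc a b, He (V₁ s ω * (V₂ s ω')ᴴ))
        = fun ω => He (V₁ s ω * (-(Ex s * Q))ᴴ) := funext fun ω => hinner s ω
    rw [h1, houter s, hG]
    simp only [Matrix.conjTranspose_neg, Matrix.mul_neg, He, Matrix.conjTranspose_neg,
      neg_add_rev]
    abel
  -- norm bounds
  obtain ⟨g, hgint, hgb⟩ := matexp_decay A hA
  have hg0 : ∀ s : ℝ, 0 ≤ s → 0 ≤ g s := fun s hs => le_trans (norm_nonneg _) (hgb s hs)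
  have hPbound : ∀ s : ℝ, ‖P s‖ ≤ K₀ * (volume (Set.Icc a b)).toReal := by
    intro s
    rw [hP]
    apply norm_setIntegral_le_of_norm_le_const (by simp)
    · intro ω hω
      rw [hosc s ω]
      exact hK₀ ω hω
  have hHe : ∀ X : Matrix (Fin n) (Fin n) ℂ, ‖He X‖ ≤ 2 * ‖X‖ := by
    intro X
    calc ‖He X‖ ≤ ‖X‖ + ‖Xᴴ‖ := norm_add_le _ _
      _ = 2 * ‖X‖ := by rw [Matrix.l2_opNorm_conjTranspose]; ring
  set c0 : ℝ := 2 * (K₀ * (volume (Set.Icc a b)).toReal) * ‖Q‖ with hc0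
  have hc00 : 0 ≤ c0 := by positivity
  have hGbound : ∀ s : ℝ, 0 ≤ s → ‖G s‖ ≤ c0 * g s := by
    intro s hs
    rw [hG]
    rw [norm_neg]
    calc ‖He (P s * (Ex s * Q)ᴴ)‖ ≤ 2 * ‖P s * (Ex s * Q)ᴴ‖ := hHe _
      _ ≤ 2 * (‖P s‖ * ‖(Ex s * Q)ᴴ‖) := by
          apply mul_le_mul_of_nonneg_left (Matrix.l2_opNorm_mul _ _) (by norm_num)
      _ = 2 * (‖P s‖ * ‖Ex s * Q‖) := by rw [Matrix.l2_opNorm_conjTranspose]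
      _ ≤ 2 * ((K₀ * (volume (Set.Icc a b)).toReal) * (‖Ex s‖ * ‖Q‖)) := by
          apply mul_le_mul_of_nonneg_left _ (by norm_num)
          exact mul_le_mul (hPbound s) (Matrix.l2_opNorm_mul _ _) (norm_nonneg _)
            (by positivity)
      _ ≤ 2 * ((K₀ * (volume (Set.Icc a b)).toReal) * (g s * ‖Q‖)) := by
          apply mul_le_mul_of_nonneg_left _ (by norm_num)
          apply mul_le_mul_of_nonneg_left _ (by positivity)
          exact mul_le_mul_of_nonneg_right (hgb s hs) (norm_nonneg _)
      _ = c0 * g s := by rw [hc0]; ring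
  -- continuity of G
  have hGcont : Continuous G := by
    rw [hG]
    apply Continuous.neg
    have h1 : Continuous fun s => P s * (Ex s * Q)ᴴ :=
      hPcont.matrix_mul ((hExcont.matrix_mul continuous_const).matrix_conjTranspose)
    exact h1.add h1.matrix_conjTranspose
  -- integrability of G on (0, ∞)
  have hGint : IntegrableOn G (Set.Ioi 0) := by
    apply Integrable.mono' (hgint.const_mul c0) hGcont.aestronglyMeasurable.restrict
    rw [ae_restrict_iff' measurableSet_Ioi]
    filter_upwards with s hs
    exact hGbound s (le_of_lt hs)
  have hlim := MeasureTheory.intervalIntegral_tendsto_integral_Ioi 0 hGint Filter.tendsto_id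
  have hrw : (fun t : ℝ => (1 / t) •
        ∫ s in (0:ℝ)..t, ∫ ω in Set.Icc a b, ∫ ω' in Set.Icc a b,
          He (V₁ s ω * (V₂ s ω')ᴴ))
      = fun t : ℝ => (1 / t) • ∫ s in (0:ℝ)..t, G s := by
    funext t
    congr 1
    exact intervalIntegral.integral_congr (fun s _ => hFeqG s)
  rw [hrw]
  have h0 : Filter.Tendsto (fun t : ℝ => 1 / t) Filter.atTop (nhds 0) := by
    simpa [one_div] using tendsto_inv_atTop_zero
  have := h0.smul hlim
  simpa using this
end
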